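/- arXiv:1610.09837 — 2 statements merged into one kernel-verified Lean document; each statement's English description precedes it below -/
import Mathlib

section
/- Consider pairs (A, A_1) where A is a formal power series in ℚ[[t, z]] and A_1 is a formal power series in ℚ[[t]] (viewed in ℚ[[t, z]] via the canonical embedding), satisfying in ℚ[[t, z]] the equation z·(−A + 1 + 2t(1+z)·A² + t(1+z)·(A_1 − 1)) + t(1+z)·(A − (1+z)·A_1) + t(1+z)·z = 0. Then: (i) there is at most one such pair; (ii) for any such pair, A_1 is the specialization of A at z = 0; and (iii) for any such pair, A_1 satisfies the cubic equation 64t³·A_1³ + 2t(24t² − 36t + 1)·A_1² + (−15t³ + 9t² + 19t − 1)·A_1 + (t³ + 27t² − 19t + 1) = 0 in ℚ[[t]]. -/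
open MvPowerSeries

/-- The canonical embedding of `ℚ[[t]]` into `ℚ[[t, z]]` (variable `0` is `t`,
variable `1` is `z`): a univariate series is viewed as a bivariate series not
depending on `z`. -/
noncomputable def embT (f : PowerSeries ℚ) : MvPowerSeries (Fin 2) ℚ :=
  fun m => if m 1 = 0 then PowerSeries.coeff (m 0) f else 0

/-- The kernel-form equation of Section 5.4.1 of the paper (with `z = x − 1`):
`z(−A + 1 + 2t(1+z)A² + t(1+z)(A₁−1)) + t(1+z)(A − (1+z)A₁) + t(1+z)z = 0`,
where `A = U(t;x)` counts the superset `𝒰⁽¹⁾` of planar Eulerian orientations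
and `A₁ = U(t;1)`. -/
def KernelEq1 (A : MvPowerSeries (Fin 2) ℚ) (A1 : PowerSeries ℚ) : Prop :=
  (X 1 : MvPowerSeries (Fin 2) ℚ) *
      (-A + 1 + 2 * X 0 * (1 + X 1) * A ^ 2 + X 0 * (1 + X 1) * (embT A1 - 1))
    + X 0 * (1 + X 1) * (A - (1 + X 1) * embT A1)
    + X 0 * (1 + X 1) * X 1 = 0

namespace KernelAux

abbrev M2 := MvPowerSeries (Fin 2) ℚ

/-- the monomial exponent `t^n z^k` -/
noncomputable def mon (n k : ℕ) : Fin 2 →₀ ℕ := Finsupp.single 0 n + Finsupp.single 1 k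

@[simp] lemma mon_apply0 (n k : ℕ) : mon n k 0 = n := by
  simp [mon, Finsupp.single_apply]

@[simp] lemma mon_apply1 (n k : ℕ) : mon n k 1 = k := by
  simp [mon, Finsupp.single_apply]

lemma eq_mon (m : Fin 2 →₀ ℕ) : m = mon (m 0) (m 1) := by
  ext i
  fin_cases i <;> simp [mon, Finsupp.single_apply]

lemma M2ext {f g : M2} (h : ∀ n k, coeff (mon n k) f = coeff (mon n k) g) : f = g := by
  apply MvPowerSeries.ext
  intro m
  rw [eq_mon m]
  exact h _ _

lemma coeff_embT' (f : PowerSeries ℚ) (m : Fin 2 →₀ ℕ) :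
    coeff m (embT f) = if m 1 = 0 then PowerSeries.coeff (m 0) f else 0 := rfl

@[simp] lemma coeff_embT (f : PowerSeries ℚ) (n k : ℕ) :
    coeff (mon n k) (embT f) = if k = 0 then PowerSeries.coeff n f else 0 := by
  rw [coeff_embT']
  simp

lemma mon_zero_right (n : ℕ) : mon n 0 = Finsupp.single 0 n := by
  simp [mon]

lemma coeff_X1_mul (g : M2) (n k : ℕ) :
    coeff (mon n k) ((X 1 : M2) * g) = if k = 0 then 0 else coeff (mon n (k-1)) g := by
  rw [X, coeff_monomial_mul]
  rcases Nat.eq_zero_or_pos k with hk | hk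
  · subst hk
    rw [if_neg, if_pos rfl]
    intro hle
    have := hle 1
    simp [Finsupp.single_apply] at this
  · have hsub : mon n k - Finsupp.single 1 1 = mon n (k-1) := by
      ext i
      rw [Finsupp.tsub_apply]
      fin_cases i <;> simp [mon, Finsupp.single_apply] <;> omega
    rw [if_pos, if_neg (by omega), hsub, one_mul]
    intro i
    fin_cases i <;> simp [Finsupp.single_apply] <;> omega

lemma coeff_embT_mul (f : PowerSeries ℚ) (g : M2) (n k : ℕ) :
    coeff (mon n k) (embT f * g)
      = ∑ j ∈ Finset.range (n+1), PowerSeries.coeff j f * coeff (mon (n-j) k) g := by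
  classical
  rw [coeff_mul]
  rw [← Finset.sum_filter_of_ne (p := fun p : (Fin 2 →₀ ℕ) × (Fin 2 →₀ ℕ) => p.1 1 = 0)
    (by
      intro p hp hne
      by_contra h
      rw [coeff_embT', if_neg h, zero_mul] at hne
      exact hne rfl)]
  apply Finset.sum_bij' (i := fun (p : (Fin 2 →₀ ℕ) × (Fin 2 →₀ ℕ)) _ => p.1 0)
    (j := fun j _ => (Finsupp.single 0 j, mon (n-j) k))
  · intro p hp
    simp only [Finset.mem_filter, Finset.HasAntidiagonal.mem_antidiagonal] at hp
    have h0 : p.1 0 + p.2 0 = n := by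
      have := congrArg (fun m : Fin 2 →₀ ℕ => m 0) hp.1
      simpa using this
    simp only [Finset.mem_range]
    omega
  · intro j hj
    simp only [Finset.mem_range] at hj
    simp only [Finset.mem_filter, Finset.HasAntidiagonal.mem_antidiagonal]
    constructor
    · ext i
      rw [Finsupp.add_apply]
      fin_cases i <;> simp [mon, Finsupp.single_apply] <;> omega
    · simp [Finsupp.single_apply]
  · intro p hp
    simp only [Finset.mem_filter, Finset.HasAntidiagonal.mem_antidiagonal] at hp
    have h0 : p.1 0 + p.2 0 = n := by
      have := congrArg (fun m : Fin 2 →₀ ℕ => m 0) hp.1; simpa using this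
    have h1 : p.1 1 + p.2 1 = k := by
      have := congrArg (fun m : Fin 2 →₀ ℕ => m 1) hp.1; simpa using this
    have hp1 : p.1 = Finsupp.single 0 (p.1 0) := by
      ext i
      fin_cases i <;> simp [Finsupp.single_apply, hp.2]
    have hp2 : p.2 = mon (n - p.1 0) k := by
      ext i
      fin_cases i <;> simp [mon, Finsupp.single_apply] <;> omega
    rw [Prod.ext_iff]
    exact ⟨hp1.symm, hp2.symm⟩
  · intro j hj
    simp [Finsupp.single_apply]
  · intro p hp
    simp only [Finset.mem_filter, Finset.HasAntidiagonal.mem_antidiagonal] at hp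
    have h0 : p.1 0 + p.2 0 = n := by
      have := congrArg (fun m : Fin 2 →₀ ℕ => m 0) hp.1; simpa using this
    have h1 : p.1 1 + p.2 1 = k := by
      have := congrArg (fun m : Fin 2 →₀ ℕ => m 1) hp.1; simpa using this
    have hp2 : p.2 = mon (n - p.1 0) k := by
      ext i
      fin_cases i <;> simp [mon, Finsupp.single_apply] <;> omega
    rw [coeff_embT', if_pos hp.2, hp2]

end KernelAux

namespace KernelAux

lemma mon_eq_zero_iff (n k : ℕ) : mon n k = 0 ↔ n = 0 ∧ k = 0 := by
  constructor
  · intro h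
    constructor
    · have := congrArg (fun m : Fin 2 →₀ ℕ => m 0) h; simpa using this
    · have := congrArg (fun m : Fin 2 →₀ ℕ => m 1) h; simpa using this
  · rintro ⟨rfl, rfl⟩
    simp [mon]

@[simp] lemma coeff_one_mon (n k : ℕ) :
    coeff (mon n k) (1 : M2) = if n = 0 ∧ k = 0 then 1 else 0 := by
  classical
  rw [coeff_one]
  simp [mon_eq_zero_iff]

lemma embT_add (f g : PowerSeries ℚ) : embT (f + g) = embT f + embT g := by
  apply M2ext
  intro n k
  simp only [coeff_embT, map_add]
  split <;> simp

lemma embT_mul (f g : PowerSeries ℚ) : embT (f * g) = embT f * embT g := by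
  apply M2ext
  intro n k
  rw [coeff_embT_mul]
  simp only [coeff_embT]
  rcases eq_or_ne k 0 with rfl | hk
  · rw [if_pos rfl, PowerSeries.coeff_mul,
      Finset.Nat.sum_antidiagonal_eq_sum_range_succ_mk]
    simp
  · rw [if_neg hk]
    symm
    apply Finset.sum_eq_zero
    intro j _
    rw [if_neg hk, mul_zero]

lemma embT_one : embT (1 : PowerSeries ℚ) = 1 := by
  apply M2ext
  intro n k
  simp only [coeff_embT, coeff_one_mon]
  rcases eq_or_ne k 0 with rfl | hk
  · simp [PowerSeries.coeff_one]
  · simp [hk]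

/-- `embT` as a ring homomorphism. -/
noncomputable def embTHom : PowerSeries ℚ →+* M2 where
  toFun := embT
  map_one' := embT_one
  map_mul' := embT_mul
  map_zero' := by
    apply M2ext
    intro n k
    simp only [coeff_embT, map_zero]
    split <;> simp
  map_add' := embT_add

@[simp] lemma embTHom_apply (f : PowerSeries ℚ) : embTHom f = embT f := rfl

lemma embT_X : embT PowerSeries.X = (X 0 : M2) := by
  apply M2ext
  intro n k
  rw [coeff_embT, MvPowerSeries.coeff_X]
  have : (mon n k = Finsupp.single 0 1) ↔ (n = 1 ∧ k = 0) := by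
    constructor
    · intro h
      constructor
      · have := congrArg (fun m : Fin 2 →₀ ℕ => m 0) h; simpa [Finsupp.single_apply] using this
      · have := congrArg (fun m : Fin 2 →₀ ℕ => m 1) h; simpa [Finsupp.single_apply] using this
    · rintro ⟨rfl, rfl⟩
      ext i
      fin_cases i <;> simp [mon, Finsupp.single_apply]
  rw [if_congr this (rfl : (1:ℚ) = 1) (rfl : (0:ℚ) = 0)]
  rcases eq_or_ne k 0 with rfl | hk
  · simp only [if_pos rfl, and_true, PowerSeries.coeff_X]
    split <;> simp_all
  · simp [hk]

lemma coeff_X0_mul (g : M2) (n k : ℕ) :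
    coeff (mon n k) ((X 0 : M2) * g) = if n = 0 then 0 else coeff (mon (n-1) k) g := by
  rw [← embT_X, coeff_embT_mul]
  rcases eq_or_ne n 0 with rfl | hn
  · simp [PowerSeries.coeff_X]
  · rw [if_neg hn]
    rw [Finset.sum_eq_single 1]
    · simp [PowerSeries.coeff_X]
    · intro j _ hj
      simp [PowerSeries.coeff_X, hj]
    · intro h
      simp only [Finset.mem_range] at h
      omega

lemma coeff_X1 (n k : ℕ) :
    coeff (mon n k) (X 1 : M2) = if n = 0 ∧ k = 1 then 1 else 0 := by
  classical
  rw [MvPowerSeries.coeff_X]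
  congr 1
  · rw [eq_iff_iff]
    constructor
    · intro h
      constructor
      · have := congrArg (fun m : Fin 2 →₀ ℕ => m 0) h; simpa [Finsupp.single_apply] using this
      · have := congrArg (fun m : Fin 2 →₀ ℕ => m 1) h; simpa [Finsupp.single_apply] using this
    · rintro ⟨rfl, rfl⟩
      ext i
      fin_cases i <;> simp [mon, Finsupp.single_apply]

lemma coeff_mul_tlow {f : M2} {N : ℕ} (hf : ∀ p k, p ≤ N → coeff (mon p k) f = 0)
    (g : M2) : ∀ p k, p ≤ N → coeff (mon p k) (f * g) = 0 := by
  classical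
  intro p k hp
  rw [coeff_mul]
  apply Finset.sum_eq_zero
  intro q hq
  rw [Finset.HasAntidiagonal.mem_antidiagonal] at hq
  have h0 : q.1 0 + q.2 0 = p := by
    have := congrArg (fun m : Fin 2 →₀ ℕ => m 0) hq; simpa using this
  have : coeff q.1 f = 0 := by
    rw [eq_mon q.1]
    exact hf _ _ (by omega)
  rw [this, zero_mul]

lemma coeff_tlow_mul {f : M2} {N : ℕ} (hf : ∀ p k, p ≤ N → coeff (mon p k) f = 0)
    (g : M2) : ∀ p k, p ≤ N → coeff (mon p k) (g * f) = 0 := by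
  rw [mul_comm]
  exact coeff_mul_tlow hf g

lemma sum_range_split (f : ℕ → ℚ) (hf0 : f 0 = 0) (n : ℕ) :
    ∑ j ∈ Finset.range (n+1), f j
      = (∑ j ∈ Finset.Ioo 0 n, f j) + (if n = 0 then 0 else f n) := by
  rcases eq_or_ne n 0 with rfl | hn
  · simpa using hf0
  · rw [Finset.sum_range_succ, if_neg hn]
    congr 1
    rw [Finset.range_eq_Ico, ← Finset.Ioo_insert_left (by omega : 0 < n),
      Finset.sum_insert (by simp)]
    simpa using hf0

end KernelAux

namespace KernelAux

theorem spec_part {A : M2} {A1 : PowerSeries ℚ} (hK : KernelEq1 A A1) (n : ℕ) :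
    PowerSeries.coeff n A1 = coeff (mon n 0) A := by
  have hQ : (X 1 : M2) *
        (-A + 1 + 2 * X 0 * (1 + X 1) * A ^ 2 + X 0 * (1 + X 1) * (embT A1 - 1))
      + X 0 * (A - embT A1 + X 1 * (A - (2 + X 1) * embT A1 + (1 + X 1))) = 0 := by
    unfold KernelEq1 at hK
    linear_combination hK
  have h := congrArg (coeff (mon (n+1) 0)) hQ
  rw [map_add, coeff_X1_mul, coeff_X0_mul, if_pos rfl, if_neg (Nat.succ_ne_zero n),
    Nat.add_sub_cancel, map_add, map_sub, coeff_X1_mul, if_pos rfl, coeff_embT,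
    if_pos rfl, map_zero] at h
  linarith [h]

theorem uniq_part {A A' : M2} {A1 A1' : PowerSeries ℚ}
    (h : KernelEq1 A A1) (h' : KernelEq1 A' A1') : A = A' ∧ A1 = A1' := by
  have hemb : embT A1 - embT A1' = embT (A1 - A1') := (map_sub embTHom A1 A1').symm
  have hG : (X 1 : M2) * (A - A') = X 0 * ((A - A') - embT (A1 - A1')
      + X 1 * (2*(1 + X 1)*(A + A')*(A - A') + (1 + X 1) * embT (A1 - A1')
          + (A - A') - (2 + X 1) * embT (A1 - A1'))) := by
    rw [← hemb]
    unfold KernelEq1 at h h'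
    linear_combination h' - h
  have main : ∀ n : ℕ, (∀ p k, p ≤ n → coeff (mon p k) (A - A') = 0) ∧
      (∀ j, j < n → PowerSeries.coeff j (A1 - A1') = 0) := by
    intro n
    induction n with
    | zero =>
      constructor
      · intro p k hp
        interval_cases p
        have h0 := congrArg (coeff (mon 0 (k+1))) hG
        rw [coeff_X1_mul, coeff_X0_mul, if_pos rfl, if_neg (Nat.succ_ne_zero k)] at h0
        simpa using h0
      · omega
    | succ n ih =>
      have hd1 : PowerSeries.coeff n (A1 - A1') = 0 := by
        have h0 := congrArg (coeff (mon (n+1) 0)) hG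
        rw [coeff_X1_mul, coeff_X0_mul, if_pos rfl, if_neg (Nat.succ_ne_zero n),
          Nat.add_sub_cancel, map_add, map_sub, coeff_X1_mul, if_pos rfl, coeff_embT,
          if_pos rfl, ih.1 n 0 le_rfl] at h0
        linarith [h0]
      have hd1' : ∀ j, j < n+1 → PowerSeries.coeff j (A1 - A1') = 0 := by
        intro j hj
        rcases Nat.lt_or_ge j n with hlt | hge
        · exact ih.2 j hlt
        · have : j = n := by omega
          subst this; exact hd1
      have hemblow : ∀ p k, p ≤ n → coeff (mon p k) (embT (A1 - A1')) = 0 := by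
        intro p k hp
        rw [coeff_embT]
        rcases eq_or_ne k 0 with rfl | hk
        · rw [if_pos rfl]; exact hd1' p (by omega)
        · rw [if_neg hk]
      have hG'low : ∀ p k, p ≤ n →
          coeff (mon p k) (2*(1 + X 1)*(A + A')*(A - A') + (1 + X 1) * embT (A1 - A1')
            + (A - A') - (2 + X 1) * embT (A1 - A1')) = 0 := by
        intro p k hp
        rw [map_sub, map_add, map_add,
          coeff_tlow_mul ih.1 (2*(1 + X 1)*(A + A')) p k hp,
          coeff_tlow_mul hemblow (1 + X 1) p k hp,
          coeff_tlow_mul hemblow (2 + X 1) p k hp,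
          ih.1 p k hp]
        ring
      constructor
      · intro p k hp
        rcases Nat.lt_or_ge p (n+1) with hlt | hge
        · exact ih.1 p k (by omega)
        · have hpe : p = n + 1 := by omega
          subst hpe
          have h0 := congrArg (coeff (mon (n+1) (k+1))) hG
          have hv1 : coeff (mon n (k+1)) (A - A') = 0 := ih.1 n (k+1) le_rfl
          have hv2 : coeff (mon n (k+1)) (embT (A1 - A1')) = 0 := hemblow n (k+1) le_rfl
          rw [coeff_X1_mul, if_neg (Nat.succ_ne_zero k), Nat.add_sub_cancel,
            coeff_X0_mul, if_neg (Nat.succ_ne_zero n), Nat.add_sub_cancel,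
            map_add, map_sub, map_sub, hv1, hv2, coeff_X1_mul, if_neg (Nat.succ_ne_zero k),
            Nat.add_sub_cancel, hG'low n k le_rfl] at h0
          simpa using h0
      · exact hd1'
  constructor
  · have : A - A' = 0 := by
      apply M2ext
      intro n k
      rw [map_zero]
      exact (main n).1 n k le_rfl
    exact sub_eq_zero.mp this
  · have : A1 - A1' = 0 := by
      apply PowerSeries.ext
      intro j
      rw [map_zero]
      exact (main (j+1)).2 j (by omega)
    exact sub_eq_zero.mp this

end KernelAux

namespace KernelAux

/-- Coefficient-level construction of the factorization `S = (z - z₀(t))·T`. -/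
noncomputable def FF (sc : ℕ → ℕ → ℚ) : ℕ → ℚ × (ℕ → ℚ)
  | 0 => (0, fun k => sc 0 (k+1))
  | (n+1) =>
    let z : ℚ := sc (n+1) 0 + ∑ j ∈ (Finset.Ioo 0 (n+1)).attach,
      (FF sc j.1).1 * (FF sc (n+1 - j.1)).2 0
    (z, fun k => sc (n+1) (k+1) + (∑ j ∈ (Finset.Ioo 0 (n+1)).attach,
      (FF sc j.1).1 * (FF sc (n+1 - j.1)).2 (k+1)) + z * sc 0 (k+2))
  termination_by n => n
  decreasing_by
    all_goals (rcases Finset.mem_Ioo.mp j.2 with ⟨h1, h2⟩; omega)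

noncomputable def zcf (sc : ℕ → ℕ → ℚ) (n : ℕ) : ℚ := (FF sc n).1

noncomputable def Tcf (sc : ℕ → ℕ → ℚ) (n k : ℕ) : ℚ := (FF sc n).2 k

lemma zcf_zero (sc : ℕ → ℕ → ℚ) : zcf sc 0 = 0 := by
  rw [zcf, FF]

lemma Tcf_zero (sc : ℕ → ℕ → ℚ) (k : ℕ) : Tcf sc 0 k = sc 0 (k+1) := by
  rw [Tcf, FF]

lemma zcf_succ (sc : ℕ → ℕ → ℚ) (n : ℕ) : zcf sc (n+1)
    = sc (n+1) 0 + ∑ j ∈ Finset.Ioo 0 (n+1), zcf sc j * Tcf sc (n+1-j) 0 := by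
  rw [zcf, FF, ← Finset.sum_attach (Finset.Ioo 0 (n+1))
    (fun j => zcf sc j * Tcf sc (n+1-j) 0)]
  rfl

lemma Tcf_succ (sc : ℕ → ℕ → ℚ) (n k : ℕ) : Tcf sc (n+1) k
    = sc (n+1) (k+1) + (∑ j ∈ Finset.Ioo 0 (n+1), zcf sc j * Tcf sc (n+1-j) (k+1))
      + zcf sc (n+1) * sc 0 (k+2) := by
  conv_lhs => rw [Tcf, FF]
  conv_rhs => rw [zcf, FF]
  rw [← Finset.sum_attach (Finset.Ioo 0 (n+1))
    (fun j => zcf sc j * Tcf sc (n+1-j) (k+1))]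
  rfl

lemma key_fact (sc : ℕ → ℕ → ℚ) (h00 : sc 0 0 = 0) (h01 : sc 0 1 = -1) (n k : ℕ) :
    (if k = 0 then 0 else Tcf sc n (k-1))
      - ∑ j ∈ Finset.range (n+1), zcf sc j * Tcf sc (n-j) k = sc n k := by
  have hf0 : ∀ k, zcf sc 0 * Tcf sc (n-0) k = 0 := by
    intro k; rw [zcf_zero, zero_mul]
  rcases k with _ | k
  · rw [if_pos rfl, sum_range_split _ (hf0 0) n]
    rcases n with _ | m
    · simp [h00]
    · rw [if_neg (Nat.succ_ne_zero m), Nat.sub_self, Tcf_zero, h01, zcf_succ]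
      ring
  · rw [if_neg (Nat.succ_ne_zero k), Nat.add_sub_cancel,
      sum_range_split _ (hf0 (k+1)) n]
    rcases n with _ | m
    · simp [Tcf_zero]
    · rw [if_neg (Nat.succ_ne_zero m), Nat.sub_self, Tcf_zero, Tcf_succ]
      ring

end KernelAux

namespace KernelAux

/-- `S = 4tz(1+z)A + t(1+z) - z`. -/
noncomputable def SofA (A : M2) : M2 :=
  X 0 * (4 * X 1 * (1 + X 1) * A + (1 + X 1)) - X 1

noncomputable def scA (A : M2) : ℕ → ℕ → ℚ := fun n k => coeff (mon n k) (SofA A)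

/-- the double root `z₀(t)` -/
noncomputable def z0A (A : M2) : PowerSeries ℚ := PowerSeries.mk (fun n => zcf (scA A) n)

noncomputable def TA (A : M2) : M2 := fun m => Tcf (scA A) (m 0) (m 1)

lemma coeff_TA (A : M2) (n k : ℕ) : coeff (mon n k) (TA A) = Tcf (scA A) n k := by
  rw [coeff_apply]
  show Tcf (scA A) ((mon n k) 0) ((mon n k) 1) = _
  rw [mon_apply0, mon_apply1]

lemma scA_00 (A : M2) : scA A 0 0 = 0 := by
  rw [scA, SofA, map_sub, coeff_X0_mul, if_pos rfl, coeff_X1, if_neg (by omega)]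
  ring

lemma scA_01 (A : M2) : scA A 0 1 = -1 := by
  rw [scA, SofA, map_sub, coeff_X0_mul, if_pos rfl, coeff_X1, if_pos ⟨rfl, rfl⟩]
  ring

lemma coeff_z0A (A : M2) (n : ℕ) :
    PowerSeries.coeff n (z0A A) = zcf (scA A) n := by
  rw [z0A, PowerSeries.coeff_mk]

lemma factA (A : M2) : ((X 1 : M2) - embT (z0A A)) * TA A = SofA A := by
  apply M2ext
  intro n k
  rw [sub_mul, map_sub, coeff_X1_mul, coeff_embT_mul]
  have hco : ∀ j ∈ Finset.range (n+1),
      PowerSeries.coeff j (z0A A) * coeff (mon (n-j) k) (TA A)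
        = zcf (scA A) j * Tcf (scA A) (n-j) k := by
    intro j _
    rw [coeff_z0A, coeff_TA]
  rw [Finset.sum_congr rfl hco]
  have hT : ∀ n' k', coeff (mon n' k') (TA A) = Tcf (scA A) n' k' := coeff_TA A
  rw [hT]
  exact key_fact (scA A) (scA_00 A) (scA_01 A) n k

/-- if `embT r` is divisible by `z - z₀(t)` (with `z₀(0) = 0`) then `r = 0`. -/
lemma cancel_w {z0 : PowerSeries ℚ} (hz0 : PowerSeries.coeff 0 z0 = 0)
    {r : PowerSeries ℚ} {g : M2}
    (heq : embT r = ((X 1 : M2) - embT z0) * g) : r = 0 := by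
  have hg : ∀ n k, coeff (mon n k) g = 0 := by
    intro n
    induction n using Nat.strong_induction_on with
    | _ n ih =>
      intro k
      have h0 := congrArg (coeff (mon n (k+1))) heq
      rw [coeff_embT, if_neg (Nat.succ_ne_zero k), sub_mul, map_sub, coeff_X1_mul,
        if_neg (Nat.succ_ne_zero k), Nat.add_sub_cancel, coeff_embT_mul] at h0
      have hsum : ∀ j ∈ Finset.range (n+1),
          PowerSeries.coeff j z0 * coeff (mon (n-j) (k+1)) g = 0 := by
        intro j hj
        rcases Nat.eq_zero_or_pos j with rfl | hjpos
        · rw [hz0, zero_mul]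
        · rw [ih (n-j) (by simp only [Finset.mem_range] at hj; omega) (k+1), mul_zero]
      rw [Finset.sum_eq_zero hsum] at h0
      linarith [h0]
  apply PowerSeries.ext
  intro n
  have h0 := congrArg (coeff (mon n 0)) heq
  rw [coeff_embT, if_pos rfl, sub_mul, map_sub, coeff_X1_mul, if_pos rfl,
    coeff_embT_mul, Finset.sum_eq_zero (fun j _ => by rw [hg (n-j) 0, mul_zero])] at h0
  simpa using h0

end KernelAux

namespace KernelAux

set_option maxHeartbeats 4000000 in
theorem cubic_part {A : M2} {A1 : PowerSeries ℚ} (hK : KernelEq1 A A1) :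
    64 * PowerSeries.X ^ 3 * A1 ^ 3
      + 2 * PowerSeries.X * (24 * PowerSeries.X ^ 2 - 36 * PowerSeries.X + 1) * A1 ^ 2
      + (-15 * PowerSeries.X ^ 3 + 9 * PowerSeries.X ^ 2 + 19 * PowerSeries.X - 1) * A1
      + (PowerSeries.X ^ 3 + 27 * PowerSeries.X ^ 2 - 19 * PowerSeries.X + 1) = 0 := by
  have hz00 : PowerSeries.coeff 0 (z0A A) = 0 := by
    rw [coeff_z0A]; exact zcf_zero (scA A)
  have hSD : (SofA A)^2 = (X 0)^2
      + (2*(X 0)^2 - 2*(X 0) + 8*(X 0)^2*embT A1) * X 1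
      + ((X 0)^2 - 10*(X 0) + 1 + 16*(X 0)^2*embT A1) * (X 1)^2
      + (-(8*(X 0)) + 8*(X 0)^2*embT A1) * (X 1)^3 := by
    unfold KernelEq1 at hK
    rw [SofA]
    linear_combination (8*(X 0)*(X 1)*(1+(X 1))) * hK
  have hw2 : ((X 1 : M2) - embT (z0A A))^2 * (TA A)^2 = (X 0)^2
      + (2*(X 0)^2 - 2*(X 0) + 8*(X 0)^2*embT A1) * X 1
      + ((X 0)^2 - 10*(X 0) + 1 + 16*(X 0)^2*embT A1) * (X 1)^2
      + (-(8*(X 0)) + 8*(X 0)^2*embT A1) * (X 1)^3 := by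
    rw [← hSD, ← factA A]; ring
  have hP0 : embTHom (PowerSeries.X^2
      + (2*PowerSeries.X^2 - 2*PowerSeries.X + 8*PowerSeries.X^2*A1) * (z0A A)
      + (PowerSeries.X^2 - 10*PowerSeries.X + 1 + 16*PowerSeries.X^2*A1) * (z0A A)^2
      + (-(8*PowerSeries.X) + 8*PowerSeries.X^2*A1) * (z0A A)^3)
      = (X 0)^2
      + (2*(X 0)^2 - 2*(X 0) + 8*(X 0)^2*embT A1) * embT (z0A A)
      + ((X 0)^2 - 10*(X 0) + 1 + 16*(X 0)^2*embT A1) * (embT (z0A A))^2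
      + (-(8*(X 0)) + 8*(X 0)^2*embT A1) * (embT (z0A A))^3 := by
    simp only [map_add, map_mul, map_pow, map_sub, map_neg, map_one, map_ofNat]
    simp only [embTHom_apply, embT_X]
  have hP1 : embTHom ((2*PowerSeries.X^2 - 2*PowerSeries.X + 8*PowerSeries.X^2*A1)
      + 2*(PowerSeries.X^2 - 10*PowerSeries.X + 1 + 16*PowerSeries.X^2*A1) * (z0A A)
      + 3*(-(8*PowerSeries.X) + 8*PowerSeries.X^2*A1) * (z0A A)^2)
      = (2*(X 0)^2 - 2*(X 0) + 8*(X 0)^2*embT A1)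
      + 2*((X 0)^2 - 10*(X 0) + 1 + 16*(X 0)^2*embT A1) * embT (z0A A)
      + 3*(-(8*(X 0)) + 8*(X 0)^2*embT A1) * (embT (z0A A))^2 := by
    simp only [map_add, map_mul, map_pow, map_sub, map_neg, map_one, map_ofNat]
    simp only [embTHom_apply, embT_X]
  have he0 : (PowerSeries.X^2
      + (2*PowerSeries.X^2 - 2*PowerSeries.X + 8*PowerSeries.X^2*A1) * (z0A A)
      + (PowerSeries.X^2 - 10*PowerSeries.X + 1 + 16*PowerSeries.X^2*A1) * (z0A A)^2
      + (-(8*PowerSeries.X) + 8*PowerSeries.X^2*A1) * (z0A A)^3) = 0 := by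
    apply cancel_w hz00 (g := ((X 1 - embT (z0A A)) * (TA A)^2
      - ((2*(X 0)^2 - 2*(X 0) + 8*(X 0)^2*embT A1)
        + 2*((X 0)^2 - 10*(X 0) + 1 + 16*(X 0)^2*embT A1) * embT (z0A A)
        + 3*(-(8*(X 0)) + 8*(X 0)^2*embT A1) * (embT (z0A A))^2)
      - (X 1 - embT (z0A A)) * (((X 0)^2 - 10*(X 0) + 1 + 16*(X 0)^2*embT A1)
          + 3*(-(8*(X 0)) + 8*(X 0)^2*embT A1) * embT (z0A A))
      - (X 1 - embT (z0A A))^2 * (-(8*(X 0)) + 8*(X 0)^2*embT A1)))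
    rw [← embTHom_apply, hP0]
    linear_combination -hw2
  have hE0M : ((X 0 : M2)^2
      + (2*(X 0)^2 - 2*(X 0) + 8*(X 0)^2*embT A1) * embT (z0A A)
      + ((X 0)^2 - 10*(X 0) + 1 + 16*(X 0)^2*embT A1) * (embT (z0A A))^2
      + (-(8*(X 0)) + 8*(X 0)^2*embT A1) * (embT (z0A A))^3) = 0 := by
    rw [← hP0, he0, map_zero]
  have hWne : ((X 1 : M2) - embT (z0A A)) ≠ 0 := by
    intro hc
    have h1 := congrArg (coeff (mon 0 1)) hc
    rw [map_sub, coeff_X1, if_pos ⟨rfl, rfl⟩, coeff_embT, if_neg one_ne_zero, map_zero] at h1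
    norm_num at h1
  have hWmul : ((X 1 : M2) - embT (z0A A)) *
      (((2*(X 0)^2 - 2*(X 0) + 8*(X 0)^2*embT A1)
        + 2*((X 0)^2 - 10*(X 0) + 1 + 16*(X 0)^2*embT A1) * embT (z0A A)
        + 3*(-(8*(X 0)) + 8*(X 0)^2*embT A1) * (embT (z0A A))^2)
       - ((X 1 - embT (z0A A)) * (TA A)^2
          - (X 1 - embT (z0A A)) * (((X 0)^2 - 10*(X 0) + 1 + 16*(X 0)^2*embT A1)
              + 3*(-(8*(X 0)) + 8*(X 0)^2*embT A1) * embT (z0A A))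
          - (X 1 - embT (z0A A))^2 * (-(8*(X 0)) + 8*(X 0)^2*embT A1))) = 0 := by
    linear_combination -hE0M - hw2
  have hg2 := (mul_eq_zero.mp hWmul).resolve_left hWne
  have he1 : ((2*PowerSeries.X^2 - 2*PowerSeries.X + 8*PowerSeries.X^2*A1)
      + 2*(PowerSeries.X^2 - 10*PowerSeries.X + 1 + 16*PowerSeries.X^2*A1) * (z0A A)
      + 3*(-(8*PowerSeries.X) + 8*PowerSeries.X^2*A1) * (z0A A)^2) = 0 := by
    apply cancel_w hz00 (g := (TA A)^2
      - (((X 0)^2 - 10*(X 0) + 1 + 16*(X 0)^2*embT A1)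
          + 3*(-(8*(X 0)) + 8*(X 0)^2*embT A1) * embT (z0A A))
      - (X 1 - embT (z0A A)) * (-(8*(X 0)) + 8*(X 0)^2*embT A1))
    rw [← embTHom_apply, hP1]
    linear_combination hg2
  have hfin : ((147456 : PowerSeries ℚ) * PowerSeries.X^6 * (1 - PowerSeries.X*A1)^3) *
      (64 * PowerSeries.X ^ 3 * A1 ^ 3
      + 2 * PowerSeries.X * (24 * PowerSeries.X ^ 2 - 36 * PowerSeries.X + 1) * A1 ^ 2
      + (-15 * PowerSeries.X ^ 3 + 9 * PowerSeries.X ^ 2 + 19 * PowerSeries.X - 1) * A1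
      + (PowerSeries.X ^ 3 + 27 * PowerSeries.X ^ 2 - 19 * PowerSeries.X + 1)) = 0 := by
    linear_combination
      ((-18432)*PowerSeries.X^3 + (552960)*PowerSeries.X^4 + (55296)*PowerSeries.X^4*A1^1
      + (-4478976)*PowerSeries.X^5 + (-2543616)*PowerSeries.X^5*A1^1
      + (-55296)*PowerSeries.X^5*A1^2 + (7372800)*PowerSeries.X^6
      + (25602048)*PowerSeries.X^6*A1^1 + (4313088)*PowerSeries.X^6*A1^2
      + (18432)*PowerSeries.X^6*A1^3 + (-1382400)*PowerSeries.X^7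
      + (-38264832)*PowerSeries.X^7*A1^1 + (-59664384)*PowerSeries.X^7*A1^2
      + (-3207168)*PowerSeries.X^7*A1^3 + (-552960)*PowerSeries.X^8
      + (3483648)*PowerSeries.X^8*A1^1 + (79405056)*PowerSeries.X^8*A1^2
      + (70170624)*PowerSeries.X^8*A1^3 + (884736)*PowerSeries.X^8*A1^4
      + (-18432)*PowerSeries.X^9 + (1880064)*PowerSeries.X^9*A1^1
      + (-2156544)*PowerSeries.X^9*A1^2 + (-87072768)*PowerSeries.X^9*A1^3
      + (-41361408)*PowerSeries.X^9*A1^4 + (55296)*PowerSeries.X^10*A1^1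
      + (-2322432)*PowerSeries.X^10*A1^2 + (-608256)*PowerSeries.X^10*A1^3
      + (56844288)*PowerSeries.X^10*A1^4 + (9732096)*PowerSeries.X^10*A1^5
      + (-55296)*PowerSeries.X^11*A1^2 + (1216512)*PowerSeries.X^11*A1^3
      + (663552)*PowerSeries.X^11*A1^4 + (-23003136)*PowerSeries.X^11*A1^5
      + (18432)*PowerSeries.X^12*A1^3 + (-221184)*PowerSeries.X^12*A1^4
      + (4718592)*PowerSeries.X^12*A1^6 + (221184)*PowerSeries.X^4*(z0A A)^1
      + (-4423680)*PowerSeries.X^5*(z0A A)^1 + (-884736)*PowerSeries.X^5*A1^1*(z0A A)^1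
      + (11943936)*PowerSeries.X^6*(z0A A)^1 + (24772608)*PowerSeries.X^6*A1^1*(z0A A)^1
      + (1327104)*PowerSeries.X^6*A1^2*(z0A A)^1 + (6193152)*PowerSeries.X^7*(z0A A)^1
      + (-65470464)*PowerSeries.X^7*A1^1*(z0A A)^1
      + (-54853632)*PowerSeries.X^7*A1^2*(z0A A)^1 + (-884736)*PowerSeries.X^7*A1^3*(z0A A)^1
      + (221184)*PowerSeries.X^8*(z0A A)^1 + (-28311552)*PowerSeries.X^8*A1^1*(z0A A)^1
      + (156598272)*PowerSeries.X^8*A1^2*(z0A A)^1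
      + (60162048)*PowerSeries.X^8*A1^3*(z0A A)^1 + (221184)*PowerSeries.X^8*A1^4*(z0A A)^1
      + (-884736)*PowerSeries.X^9*A1^1*(z0A A)^1 + (51314688)*PowerSeries.X^9*A1^2*(z0A A)^1
      + (-210567168)*PowerSeries.X^9*A1^3*(z0A A)^1
      + (-32735232)*PowerSeries.X^9*A1^4*(z0A A)^1
      + (1327104)*PowerSeries.X^10*A1^2*(z0A A)^1
      + (-46006272)*PowerSeries.X^10*A1^3*(z0A A)^1
      + (167657472)*PowerSeries.X^10*A1^4*(z0A A)^1
      + (7077888)*PowerSeries.X^10*A1^5*(z0A A)^1 + (-884736)*PowerSeries.X^11*A1^3*(z0A A)^1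
      + (20348928)*PowerSeries.X^11*A1^4*(z0A A)^1
      + (-74317824)*PowerSeries.X^11*A1^5*(z0A A)^1
      + (221184)*PowerSeries.X^12*A1^4*(z0A A)^1 + (-3538944)*PowerSeries.X^12*A1^5*(z0A A)^1
      + (14155776)*PowerSeries.X^12*A1^6*(z0A A)^1) * he0
      + ((-9216)*PowerSeries.X^4 + (193536)*PowerSeries.X^5 + (64512)*PowerSeries.X^5*A1^1
      + (-645120)*PowerSeries.X^6 + (-1612800)*PowerSeries.X^6*A1^1
      + (-138240)*PowerSeries.X^6*A1^2 + (1050624)*PowerSeries.X^7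
      + (3741696)*PowerSeries.X^7*A1^1 + (4856832)*PowerSeries.X^7*A1^2
      + (119808)*PowerSeries.X^7*A1^3 + (285696)*PowerSeries.X^8
      + (-4110336)*PowerSeries.X^8*A1^1 + (-7354368)*PowerSeries.X^8*A1^2
      + (-6829056)*PowerSeries.X^8*A1^3 + (-36864)*PowerSeries.X^8*A1^4
      + (9216)*PowerSeries.X^9 + (-1004544)*PowerSeries.X^9*A1^1
      + (6617088)*PowerSeries.X^9*A1^2 + (6064128)*PowerSeries.X^9*A1^3
      + (4571136)*PowerSeries.X^9*A1^4 + (-27648)*PowerSeries.X^10*A1^1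
      + (1299456)*PowerSeries.X^10*A1^2 + (-5695488)*PowerSeries.X^10*A1^3
      + (-1806336)*PowerSeries.X^10*A1^4 + (-1179648)*PowerSeries.X^10*A1^5
      + (27648)*PowerSeries.X^11*A1^2 + (-728064)*PowerSeries.X^11*A1^3
      + (2727936)*PowerSeries.X^11*A1^4 + (-9216)*PowerSeries.X^12*A1^3
      + (147456)*PowerSeries.X^12*A1^4 + (-589824)*PowerSeries.X^12*A1^5
      + (9216)*PowerSeries.X^3*(z0A A)^1 + (-276480)*PowerSeries.X^4*(z0A A)^1
      + (-27648)*PowerSeries.X^4*A1^1*(z0A A)^1 + (2276352)*PowerSeries.X^5*(z0A A)^1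
      + (1271808)*PowerSeries.X^5*A1^1*(z0A A)^1 + (27648)*PowerSeries.X^5*A1^2*(z0A A)^1
      + (-4091904)*PowerSeries.X^6*(z0A A)^1 + (-13095936)*PowerSeries.X^6*A1^1*(z0A A)^1
      + (-2156544)*PowerSeries.X^6*A1^2*(z0A A)^1 + (-9216)*PowerSeries.X^6*A1^3*(z0A A)^1
      + (-230400)*PowerSeries.X^7*(z0A A)^1 + (22818816)*PowerSeries.X^7*A1^1*(z0A A)^1
      + (30643200)*PowerSeries.X^7*A1^2*(z0A A)^1 + (1603584)*PowerSeries.X^7*A1^3*(z0A A)^1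
      + (239616)*PowerSeries.X^8*(z0A A)^1 + (2534400)*PowerSeries.X^8*A1^1*(z0A A)^1
      + (-52752384)*PowerSeries.X^8*A1^2*(z0A A)^1
      + (-36117504)*PowerSeries.X^8*A1^3*(z0A A)^1 + (-442368)*PowerSeries.X^8*A1^4*(z0A A)^1
      + (9216)*PowerSeries.X^9*(z0A A)^1 + (-792576)*PowerSeries.X^9*A1^1*(z0A A)^1
      + (-6810624)*PowerSeries.X^9*A1^2*(z0A A)^1 + (66981888)*PowerSeries.X^9*A1^3*(z0A A)^1
      + (21307392)*PowerSeries.X^9*A1^4*(z0A A)^1 + (-27648)*PowerSeries.X^10*A1^1*(z0A A)^1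
      + (940032)*PowerSeries.X^10*A1^2*(z0A A)^1 + (7529472)*PowerSeries.X^10*A1^3*(z0A A)^1
      + (-51240960)*PowerSeries.X^10*A1^4*(z0A A)^1
      + (-5013504)*PowerSeries.X^10*A1^5*(z0A A)^1 + (27648)*PowerSeries.X^11*A1^2*(z0A A)^1
      + (-460800)*PowerSeries.X^11*A1^3*(z0A A)^1
      + (-3612672)*PowerSeries.X^11*A1^4*(z0A A)^1
      + (23003136)*PowerSeries.X^11*A1^5*(z0A A)^1 + (-9216)*PowerSeries.X^12*A1^3*(z0A A)^1
      + (73728)*PowerSeries.X^12*A1^4*(z0A A)^1 + (589824)*PowerSeries.X^12*A1^5*(z0A A)^1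
      + (-4718592)*PowerSeries.X^12*A1^6*(z0A A)^1 + (-73728)*PowerSeries.X^4*(z0A A)^2
      + (1474560)*PowerSeries.X^5*(z0A A)^2 + (294912)*PowerSeries.X^5*A1^1*(z0A A)^2
      + (-3981312)*PowerSeries.X^6*(z0A A)^2 + (-8257536)*PowerSeries.X^6*A1^1*(z0A A)^2
      + (-442368)*PowerSeries.X^6*A1^2*(z0A A)^2 + (-2064384)*PowerSeries.X^7*(z0A A)^2
      + (21823488)*PowerSeries.X^7*A1^1*(z0A A)^2 + (18284544)*PowerSeries.X^7*A1^2*(z0A A)^2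
      + (294912)*PowerSeries.X^7*A1^3*(z0A A)^2 + (-73728)*PowerSeries.X^8*(z0A A)^2
      + (9437184)*PowerSeries.X^8*A1^1*(z0A A)^2 + (-52199424)*PowerSeries.X^8*A1^2*(z0A A)^2
      + (-20054016)*PowerSeries.X^8*A1^3*(z0A A)^2 + (-73728)*PowerSeries.X^8*A1^4*(z0A A)^2
      + (294912)*PowerSeries.X^9*A1^1*(z0A A)^2 + (-17104896)*PowerSeries.X^9*A1^2*(z0A A)^2
      + (70189056)*PowerSeries.X^9*A1^3*(z0A A)^2 + (10911744)*PowerSeries.X^9*A1^4*(z0A A)^2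
      + (-442368)*PowerSeries.X^10*A1^2*(z0A A)^2
      + (15335424)*PowerSeries.X^10*A1^3*(z0A A)^2
      + (-55885824)*PowerSeries.X^10*A1^4*(z0A A)^2
      + (-2359296)*PowerSeries.X^10*A1^5*(z0A A)^2 + (294912)*PowerSeries.X^11*A1^3*(z0A A)^2
      + (-6782976)*PowerSeries.X^11*A1^4*(z0A A)^2
      + (24772608)*PowerSeries.X^11*A1^5*(z0A A)^2 + (-73728)*PowerSeries.X^12*A1^4*(z0A A)^2
      + (1179648)*PowerSeries.X^12*A1^5*(z0A A)^2
      + (-4718592)*PowerSeries.X^12*A1^6*(z0A A)^2) * he1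
  rcases mul_eq_zero.mp hfin with h | h
  · exfalso
    have c1 : (147456 : PowerSeries ℚ) ≠ 0 := by
      intro hc
      have := congrArg (PowerSeries.constantCoeff) hc
      simp only [map_ofNat, map_zero] at this
      norm_num at this
    have c2 : (PowerSeries.X : PowerSeries ℚ)^6 ≠ 0 := pow_ne_zero _ PowerSeries.X_ne_zero
    have c3 : ((1 : PowerSeries ℚ) - PowerSeries.X*A1)^3 ≠ 0 := by
      apply pow_ne_zero
      intro hc
      have := congrArg (PowerSeries.constantCoeff) hc
      simp only [map_sub, map_one, map_mul, PowerSeries.constantCoeff_X, zero_mul, sub_zero,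
        map_zero] at this
      norm_num at this
    exact (mul_ne_zero (mul_ne_zero c1 c2) c3) h
  · exact h

end KernelAux


/-- (i) There is at most one pair `(A, A₁)` with `A ∈ ℚ[[t,z]]`,
`A₁ ∈ ℚ[[t]]` satisfying the kernel equation; (ii) for any such pair, `A₁` is
the specialization of `A` at `z = 0`; (iii) for any such pair, `A₁` satisfies
the cubic equation (25) of the paper,
`64t³A₁³ + 2t(24t²−36t+1)A₁² + (−15t³+9t²+19t−1)A₁ + (t³+27t²−19t+1) = 0`. -/
theorem kernelEq1_unique_spec_cubic :
    (∀ (A A' : MvPowerSeries (Fin 2) ℚ) (A1 A1' : PowerSeries ℚ),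
      KernelEq1 A A1 → KernelEq1 A' A1' → A = A' ∧ A1 = A1') ∧
    (∀ (A : MvPowerSeries (Fin 2) ℚ) (A1 : PowerSeries ℚ), KernelEq1 A A1 →
      ∀ n : ℕ, PowerSeries.coeff n A1 =
        MvPowerSeries.coeff (Finsupp.single (0 : Fin 2) n) A) ∧
    (∀ (A : MvPowerSeries (Fin 2) ℚ) (A1 : PowerSeries ℚ), KernelEq1 A A1 →
      64 * PowerSeries.X ^ 3 * A1 ^ 3
        + 2 * PowerSeries.X * (24 * PowerSeries.X ^ 2 - 36 * PowerSeries.X + 1) * A1 ^ 2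
        + (-15 * PowerSeries.X ^ 3 + 9 * PowerSeries.X ^ 2 + 19 * PowerSeries.X - 1) * A1
        + (PowerSeries.X ^ 3 + 27 * PowerSeries.X ^ 2 - 19 * PowerSeries.X + 1) = 0) := by
  refine ⟨fun A A' A1 A1' h h' => KernelAux.uniq_part h h',
    fun A A1 hK n => ?_, fun A A1 hK => KernelAux.cubic_part hK⟩
  rw [KernelAux.spec_part hK n, KernelAux.mon_zero_right]
end

section
/- There is a unique formal power series L ∈ ℝ[[t]] satisfying 2t·L² − (1−t)²·L + (1 − 2t − t²) = 0. Let ρ be the smallest positive real root of the polynomial X⁴ + 4X³ + 22X² − 12X + 1 (such a root exists). Then there is a constant c > 0 such that the coefficients ℓ_n := [tⁿ]L satisfy ℓ_n · ρⁿ · n^{3/2} → c as n → ∞; in particular ℓ_n ∼ c·(1/ρ)ⁿ·n^{−3/2}. -/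
open PowerSeries Filter Finset

noncomputable def sqc (F : PowerSeries ℝ) : ℕ → ℝ
  | 0 => 1
  | (n+1) => ((coeff (n+1)) F
      - ∑ k ∈ (Finset.range n).attach, sqc F (k.1+1) * sqc F (n - k.1)) / 2
  decreasing_by
  · have := Finset.mem_range.mp k.2; omega
  · have := Finset.mem_range.mp k.2; omega

noncomputable def sqrtS (F : PowerSeries ℝ) : PowerSeries ℝ := mk (sqc F)

lemma sqc_zero (F : PowerSeries ℝ) : sqc F 0 = 1 := by rw [sqc]

lemma sqc_succ (F : PowerSeries ℝ) (n : ℕ) :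
    sqc F (n+1) = ((coeff (n+1)) F
      - ∑ k ∈ Finset.range n, sqc F (k+1) * sqc F (n - k)) / 2 := by
  rw [sqc]
  congr 2
  exact Finset.sum_attach (Finset.range n) (fun k => sqc F (k+1) * sqc F (n-k))

lemma constantCoeff_sqrtS (F : PowerSeries ℝ) : constantCoeff (sqrtS F) = 1 := by
  have : (coeff 0) (sqrtS F) = 1 := by simp [sqrtS, sqc_zero]
  simpa using this

lemma sqrtS_mul_self (F : PowerSeries ℝ) (hF : coeff 0 F = 1) :
    sqrtS F * sqrtS F = F := by
  ext n
  rw [coeff_mul, Finset.Nat.sum_antidiagonal_eq_sum_range_succ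
    (f := fun i j => (coeff i) (sqrtS F) * (coeff j) (sqrtS F))]
  cases n with
  | zero =>
      rw [Finset.sum_range_one, show ((coeff 0) (sqrtS F)) = 1 by simp [sqrtS, sqc_zero]]
      simpa using hF.symm
  | succ n =>
      simp only [sqrtS, coeff_mk]
      rw [Finset.sum_range_succ, Finset.sum_range_succ']
      have h1 : ∀ k ∈ Finset.range n, sqc F (k+1) * sqc F (n+1-(k+1)) =
          sqc F (k+1) * sqc F (n-k) := by
        intro k hk; congr 2; omega
      rw [Finset.sum_congr rfl h1]
      simp only [sqc_zero, Nat.sub_self, Nat.sub_zero, one_mul, mul_one]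
      linarith [sqc_succ F n]

open scoped Derivation in
lemma sqrtS_ode (F : PowerSeries ℝ) (hF : coeff 0 F = 1) :
    2 * F * (d⁄dX ℝ (sqrtS F)) = (d⁄dX ℝ F) * sqrtS F := by
  have h2 : sqrtS F * sqrtS F = F := sqrtS_mul_self F hF
  have hD := congrArg (d⁄dX ℝ) h2
  rw [Derivation.leibniz, smul_eq_mul] at hD
  linear_combination (-2 * (d⁄dX ℝ (sqrtS F))) * h2 + sqrtS F * hD

noncomputable def w : ℕ → ℝ := sqc (1 - X)

lemma coeff0_one_sub_X : coeff 0 ((1:PowerSeries ℝ) - X) = 1 := by simp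

lemma w_rec (n : ℕ) : (2*(n:ℝ)+2) * w (n+1) = (2*(n:ℝ)-1) * w n := by
  have hode := sqrtS_ode (1-X) coeff0_one_sub_X
  have hD : (d⁄dX ℝ) ((1:PowerSeries ℝ) - X) = -1 := by
    rw [map_sub]; simp
  rw [hD] at hode
  have e : 2 * ((1:PowerSeries ℝ)-X) * (d⁄dX ℝ (sqrtS (1-X)))
      = C 2 * (d⁄dX ℝ (sqrtS (1-X))) - X * (C 2 * (d⁄dX ℝ (sqrtS (1-X)))) := by
    rw [map_ofNat]; ring
  rw [e] at hode
  cases n with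
  | zero =>
      have hc := congrArg (coeff 0) hode
      rw [neg_one_mul] at hc
      simp only [map_sub, coeff_zero_X_mul, coeff_C_mul, coeff_derivative, map_neg,
        sqrtS, coeff_mk, sqc_zero] at hc
      simp only [w, Nat.cast_zero, sqc_zero]
      norm_num at hc ⊢
      linarith
  | succ n =>
      have hc := congrArg (coeff (n+1)) hode
      rw [neg_one_mul] at hc
      simp only [map_sub, coeff_succ_X_mul, coeff_C_mul, coeff_derivative, map_neg,
        sqrtS, coeff_mk] at hc
      simp only [w]
      push_cast at hc ⊢
      ring_nf at hc ⊢
      linarith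

lemma w_zero : w 0 = 1 := sqc_zero _

lemma w_succ (n : ℕ) : w (n+1) = w n * ((2*(n:ℝ)-1)/(2*(n:ℝ)+2)) := by
  have h := w_rec n
  have h2 : (2*(n:ℝ)+2) ≠ 0 := by positivity
  field_simp
  linarith

lemma w_one : w 1 = -(1/2) := by
  have := w_succ 0
  rw [w_zero] at this
  norm_num at this
  linarith

lemma w_two : w 2 = -(1/8) := by
  have := w_succ 1
  rw [w_one] at this
  norm_num at this
  linarith

lemma w_neg : ∀ n, 1 ≤ n → w n < 0 := by
  intro n hn
  induction n, hn using Nat.le_induction with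
  | base => rw [w_one]; norm_num
  | succ n hn ih =>
      rw [w_succ n]
      apply mul_neg_of_neg_of_pos ih
      have : (1:ℝ) ≤ (n:ℝ) := by exact_mod_cast hn
      apply div_pos <;> nlinarith

lemma w_abs_le : ∀ n, |w n| ≤ 1 := by
  intro n
  induction n with
  | zero => rw [w_zero]; norm_num
  | succ n ih =>
      rw [w_succ n, abs_mul, abs_div]
      have h1 : |2*(n:ℝ)-1| ≤ |2*(n:ℝ)+2| := by
        rw [abs_of_nonneg (by positivity : (0:ℝ) ≤ 2*(n:ℝ)+2)]
        rw [abs_le]; constructor <;> nlinarith [Nat.cast_nonneg (α := ℝ) n]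
      have h2 : (0:ℝ) < |2*(n:ℝ)+2| := by positivity
      calc |w n| * (|2*(n:ℝ)-1| / |2*(n:ℝ)+2|) ≤ |w n| * 1 := by
            apply mul_le_mul_of_nonneg_left _ (abs_nonneg _)
            rw [div_le_one h2]; exact h1
        _ ≤ 1 := by rw [mul_one]; exact ih

noncomputable def aw (m : ℕ) : ℝ := -w m * (m:ℝ)^((3:ℝ)/2)

lemma aw_nonneg (m : ℕ) : 0 ≤ aw m := by
  rcases Nat.eq_zero_or_pos m with h | h
  · simp [aw, h]
  · exact mul_nonneg (by linarith [w_neg m h]) (Real.rpow_nonneg (Nat.cast_nonneg m) _)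

lemma aw_sq (m : ℕ) : aw m ^ 2 = w m ^ 2 * (m:ℝ)^(3:ℕ) := by
  unfold aw
  rw [mul_pow, neg_pow, ← Real.rpow_natCast ((m:ℝ)^((3:ℝ)/2)) 2,
    ← Real.rpow_mul (Nat.cast_nonneg m), ← Real.rpow_natCast (m:ℝ) 3]
  norm_num

lemma aw_one : aw 1 = 1/2 := by simp [aw, w_one]

lemma aw_anti (m : ℕ) (hm : 1 ≤ m) : aw (m+1) ≤ aw m := by
  have hx : (1:ℝ) ≤ (m:ℝ) := Nat.one_le_cast.mpr hm
  have key : aw (m+1)^2 ≤ aw m ^2 := by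
    rw [aw_sq, aw_sq, w_succ]
    push_cast
    have h2 : (2*(m:ℝ)+2) ≠ 0 := by positivity
    rw [mul_pow, div_pow]
    rw [mul_comm (w m ^2) _, mul_assoc, div_mul_eq_mul_div, div_le_iff₀ (by positivity)]
    nlinarith [sq_nonneg (w m), sq_nonneg (w m * ((m:ℝ)+1)), sq_nonneg (w m * ((m:ℝ)+1) * (m:ℝ))]
  exact (pow_le_pow_iff_left₀ (aw_nonneg _) (aw_nonneg _) (by norm_num)).mp key

lemma aw_lb : ∀ m, 2 ≤ m → 1/16 ≤ aw m ^ 2 * (((m:ℝ)-1)/(m:ℝ)) := by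
  intro m hm
  induction m, hm using Nat.le_induction with
  | base =>
      rw [aw_sq, w_two]
      norm_num
  | succ m hm ih =>
      have hx : (2:ℝ) ≤ (m:ℝ) := by exact_mod_cast Nat.cast_le.mpr hm
      have key : aw m ^2 * (((m:ℝ)-1)/(m:ℝ)) ≤ aw (m+1)^2 * (((m:ℝ)+1-1)/((m:ℝ)+1)) := by
        rw [aw_sq, aw_sq, w_succ]
        push_cast
        have h1 : (0:ℝ) < (m:ℝ) := by linarith
        have h2 : (0:ℝ) < (m:ℝ)+1 := by linarith
        rw [mul_pow, div_pow]
        field_simp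
        nlinarith [sq_nonneg (w m), sq_nonneg (w m * (m:ℝ)), sq_nonneg (w m * (m:ℝ) * (m:ℝ)),
          sq_nonneg (w m * ((m:ℝ)+1)), sq_nonneg (w m * (m:ℝ) * ((m:ℝ)+1))]
      push_cast
      linarith

lemma aw_ge_quarter : ∀ m, 1 ≤ m → 1/4 ≤ aw m := by
  intro m hm
  rcases eq_or_lt_of_le hm with h | h
  · rw [← h, aw_one]; norm_num
  · have hm2 : 2 ≤ m := h
    have hx : (2:ℝ) ≤ (m:ℝ) := by exact_mod_cast hm2
    have h1 := aw_lb m hm2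
    have h2 : aw m ^ 2 * (((m:ℝ)-1)/(m:ℝ)) ≤ aw m ^ 2 := by
      apply mul_le_of_le_one_right (sq_nonneg _)
      rw [div_le_one (by linarith)]; linarith
    nlinarith [aw_nonneg m]

lemma exists_c0 : ∃ c₀ : ℝ, 1/4 ≤ c₀ ∧ Tendsto aw atTop (nhds c₀) := by
  set a' : ℕ → ℝ := fun m => aw (m+1) with ha'
  have hanti : Antitone a' := antitone_nat_of_succ_le (fun n => aw_anti (n+1) (by omega))
  have hbdd : BddBelow (Set.range a') := by
    refine ⟨0, ?_⟩
    rintro x ⟨m, rfl⟩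
    exact aw_nonneg _
  refine ⟨⨅ m, a' m, ?_, ?_⟩
  · exact le_ciInf (fun m => aw_ge_quarter (m+1) (by omega))
  · exact (tendsto_add_atTop_iff_nat 1).mp (tendsto_atTop_ciInf hanti hbdd)

noncomputable def gs (ρ : ℝ) : PowerSeries ℝ :=
  1 - C (ρ^3+4*ρ^2+22*ρ) * X - C (ρ^2+4*ρ) * X^2 - C ρ * X^3

lemma coeff0_gs (ρ : ℝ) : coeff 0 (gs ρ) = 1 := by simp [gs]

noncomputable def Δh : PowerSeries ℝ := 1 - 12*X + 22*X^2 + 4*X^3 + X^4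

noncomputable def Bs (ρ : ℝ) : PowerSeries ℝ := rescale ρ⁻¹ (sqrtS (1 - X))
noncomputable def Hs (ρ : ℝ) : PowerSeries ℝ := sqrtS (gs ρ)
noncomputable def Ss (ρ : ℝ) : PowerSeries ℝ := Bs ρ * Hs ρ

lemma C_ne_zero {x : ℝ} (hx : x ≠ 0) : (C x : PowerSeries ℝ) ≠ 0 :=
  fun h => hx (by simpa using congrArg (constantCoeff) h)

lemma Ss_sq (ρ : ℝ) (hρ : ρ ≠ 0)
    (hroot : ρ ^ 4 + 4 * ρ ^ 3 + 22 * ρ ^ 2 - 12 * ρ + 1 = 0) :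
    Ss ρ * Ss ρ = Δh := by
  have hW : sqrtS (1-X) * sqrtS (1-X) = 1 - X := sqrtS_mul_self _ coeff0_one_sub_X
  have hB : Bs ρ * Bs ρ = 1 - C ρ⁻¹ * X := by
    rw [Bs, ← map_mul, hW, map_sub, map_one, rescale_X]
  have hH : Hs ρ * Hs ρ = gs ρ := sqrtS_mul_self _ (coeff0_gs ρ)
  have hCρ : (C ρ) * (C ρ⁻¹) = 1 := by
    rw [← map_mul, mul_inv_cancel₀ hρ, map_one]
  have hC : (C ρ)^4 + 4*(C ρ)^3 + 22*(C ρ)^2 - 12*(C ρ) + 1 = 0 := by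
    have h2 := congrArg (C (R := ℝ)) hroot
    simpa only [map_add, map_sub, map_mul, map_pow, map_ofNat, map_one, map_zero] using h2
  have hgs : gs ρ = 1 - ((C ρ)^3 + 4*(C ρ)^2 + 22*(C ρ)) * X
      - ((C ρ)^2 + 4*(C ρ))*X^2 - (C ρ) * X^3 := by
    simp only [gs, map_add, map_mul, map_pow, map_ofNat]
  have hvu : (C ρ⁻¹) * (C ρ) = 1 := by rw [mul_comm]; exact hCρ
  have hmain' : (C ρ - X) * gs ρ = C ρ * Δh := by
    rw [hgs, Δh]
    linear_combination (-X) * hC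
  calc Ss ρ * Ss ρ = (Bs ρ * Bs ρ) * (Hs ρ * Hs ρ) := by rw [Ss]; ring
  _ = (1 - C ρ⁻¹ * X) * gs ρ := by rw [hB, hH]
  _ = C ρ⁻¹ * ((C ρ - X) * gs ρ) := by linear_combination (-(gs ρ)) * hvu
  _ = C ρ⁻¹ * (C ρ * Δh) := by rw [hmain']
  _ = Δh := by rw [← mul_assoc, hvu, one_mul]

noncomputable def Ls (ρ : ℝ) : PowerSeries ℝ :=
  mk fun n => (coeff (n+1) ((1-X)^2 - Ss ρ))/4

lemma coeff0_Ss (ρ : ℝ) : coeff 0 (Ss ρ) = 1 := by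
  have h1 : coeff 0 (Bs ρ) = 1 := by
    rw [Bs, coeff_rescale]
    simp [sqrtS, sqc_zero]
  have h2 : coeff 0 (Hs ρ) = 1 := by
    simp [Hs, sqrtS, sqc_zero]
  simp only [coeff_zero_eq_constantCoeff] at h1 h2 ⊢
  rw [Ss, map_mul, h1, h2, one_mul]

lemma hU (ρ : ℝ) : X * (4 * Ls ρ) = (1-X)^2 - Ss ρ := by
  ext n
  cases n with
  | zero =>
      rw [coeff_zero_X_mul]
      have : coeff 0 ((1-X)^2 - Ss ρ) = 0 := by
        rw [map_sub, coeff0_Ss]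
        simp [pow_two, coeff_mul]
      rw [this]
  | succ n =>
      rw [coeff_succ_X_mul]
      rw [show (4 : PowerSeries ℝ) = C 4 from (map_ofNat _ 4).symm, coeff_C_mul]
      rw [Ls, coeff_mk]
      ring

lemma Ls_spec (ρ : ℝ) (hρ : ρ ≠ 0)
    (hroot : ρ ^ 4 + 4 * ρ ^ 3 + 22 * ρ ^ 2 - 12 * ρ + 1 = 0) :
    2 * X * Ls ρ ^ 2 - (1 - X) ^ 2 * Ls ρ + (1 - 2 * X - X ^ 2) = 0 := by
  have hS2 := Ss_sq ρ hρ hroot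
  have hS' : Ss ρ = (1-X)^2 - X*(4*Ls ρ) := by linear_combination hU ρ
  have e : ((1-X)^2 - X*(4*Ls ρ)) * ((1-X)^2 - X*(4*Ls ρ))
      = (1-X)^4 - 8*X*(1-2*X-X^2) := by
    rw [← hS', hS2, Δh]; ring
  have h8 : (8 : PowerSeries ℝ) * X *
      (2 * X * Ls ρ ^ 2 - (1 - X) ^ 2 * Ls ρ + (1 - 2 * X - X ^ 2)) = 0 := by
    linear_combination e
  have h8' : (8 : PowerSeries ℝ) * X ≠ 0 := by
    apply mul_ne_zero _ X_ne_zero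
    rw [show (8 : PowerSeries ℝ) = C 8 from (map_ofNat _ 8).symm]
    exact C_ne_zero (by norm_num)
  rcases mul_eq_zero.mp h8 with h | h
  · exact absurd h h8'
  · exact h

lemma Ls_unique (ρ : ℝ) (hρ : ρ ≠ 0)
    (hroot : ρ ^ 4 + 4 * ρ ^ 3 + 22 * ρ ^ 2 - 12 * ρ + 1 = 0)
    (M : PowerSeries ℝ)
    (hM : 2 * X * M ^ 2 - (1 - X) ^ 2 * M + (1 - 2 * X - X ^ 2) = 0) :
    M = Ls ρ := by
  have hL := Ls_spec ρ hρ hroot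
  have hd : (M - Ls ρ) * (2*X*(M + Ls ρ) - (1-X)^2) = 0 := by
    linear_combination hM - hL
  rcases mul_eq_zero.mp hd with h | h
  · exact sub_eq_zero.mp h
  · exfalso
    have := congrArg (constantCoeff) h
    simp [map_sub, map_mul, map_pow] at this

lemma coeff_two_mul (n : ℕ) (F : PowerSeries ℝ) :
    coeff n (2 * F) = 2 * coeff n F := by
  rw [show (2 : PowerSeries ℝ) = C 2 from (map_ofNat _ 2).symm, coeff_C_mul]

lemma Dgs (ρ : ℝ) : d⁄dX ℝ (gs ρ) =
    - C (ρ^3+4*ρ^2+22*ρ) - C (2*(ρ^2+4*ρ)) * X - C (3*ρ) * (X*X) := by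
  ext n
  rcases n with _ | _ | _ | n <;>
    simp [gs, coeff_derivative, coeff_one, coeff_C, coeff_X, coeff_X_pow,
      pow_succ, coeff_succ_X_mul, map_sub, map_neg, coeff_C_mul, mul_comm, mul_assoc] <;>
    ring_nf <;>
    simp [coeff_X_pow] <;> norm_num

lemma hc_rec (ρ : ℝ) (m : ℕ) :
    2*((m:ℝ)+4) * sqc (gs ρ) (m+4)
      = (ρ^3+4*ρ^2+22*ρ) * (2*(m:ℝ)+5) * sqc (gs ρ) (m+3)
        + (ρ^2+4*ρ) * (2*(m:ℝ)+2) * sqc (gs ρ) (m+2)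
        + ρ * (2*(m:ℝ)-1) * sqc (gs ρ) (m+1) := by
  have hode := sqrtS_ode (gs ρ) (coeff0_gs ρ)
  set P := d⁄dX ℝ (sqrtS (gs ρ)) with hP
  have harr : 2 * gs ρ * P
      = 2*P - C (ρ^3+4*ρ^2+22*ρ) * (X*(2*P)) - C (ρ^2+4*ρ) * (X*(X*(2*P)))
        - C ρ * (X*(X*(X*(2*P)))) := by
    rw [gs]; ring
  have harr2 : (d⁄dX ℝ (gs ρ)) * sqrtS (gs ρ)
      = - (C (ρ^3+4*ρ^2+22*ρ) * sqrtS (gs ρ))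
        - C (2*(ρ^2+4*ρ)) * (X * sqrtS (gs ρ))
        - C (3*ρ) * (X*(X* sqrtS (gs ρ))) := by
    rw [Dgs]; ring
  rw [harr, harr2] at hode
  have hc := congrArg (coeff (m+3)) hode
  simp only [map_sub, map_neg, coeff_C_mul, coeff_succ_X_mul, coeff_two_mul,
    hP, coeff_derivative, sqrtS, coeff_mk] at hc
  push_cast at hc ⊢
  ring_nf at hc ⊢
  linarith

lemma gs_coeff1 (ρ : ℝ) : coeff 1 (gs ρ) = -(ρ^3+4*ρ^2+22*ρ) := by
  simp only [gs, map_sub, coeff_C_mul, coeff_one, coeff_X, coeff_X_pow]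
  norm_num

lemma gs_coeff2 (ρ : ℝ) : coeff 2 (gs ρ) = -(ρ^2+4*ρ) := by
  simp only [gs, map_sub, coeff_C_mul, coeff_one, coeff_X, coeff_X_pow]
  norm_num

lemma gs_coeff3 (ρ : ℝ) : coeff 3 (gs ρ) = -ρ := by
  simp only [gs, map_sub, coeff_C_mul, coeff_one, coeff_X, coeff_X_pow]
  norm_num

section bounds
variable {ρ : ℝ} (hρ1 : 51/500 < ρ) (hρ2 : ρ ≤ 11/100)

include hρ1 hρ2

lemma hc_one : sqc (gs ρ) 1 = -(ρ^3+4*ρ^2+22*ρ)/2 := by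
  rw [sqc_succ, gs_coeff1]; simp

lemma hc_one_abs : |sqc (gs ρ) 1| ≤ 124/100 := by
  rw [hc_one hρ1 hρ2, abs_div, abs_neg]
  rw [abs_of_nonneg (by nlinarith : (0:ℝ) ≤ ρ^3+4*ρ^2+22*ρ)]
  rw [abs_of_nonneg (by norm_num : (0:ℝ) ≤ (2:ℝ))]
  nlinarith

lemma hc_two_abs : |sqc (gs ρ) 2| ≤ 11/10 := by
  have h1 := hc_one_abs hρ1 hρ2
  have e : sqc (gs ρ) 2 = (-(ρ^2+4*ρ) - sqc (gs ρ) 1 * sqc (gs ρ) 1)/2 := by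
    rw [sqc_succ, gs_coeff2]
    norm_num [Finset.sum_range_one]
  rw [e, abs_div, abs_of_nonneg (by norm_num : (0:ℝ) ≤ (2:ℝ))]
  have h2 : |-(ρ^2+4*ρ) - sqc (gs ρ) 1 * sqc (gs ρ) 1| ≤ |ρ^2+4*ρ| + |sqc (gs ρ) 1| * |sqc (gs ρ) 1| := by
    calc _ ≤ |-(ρ^2+4*ρ)| + |sqc (gs ρ) 1 * sqc (gs ρ) 1| := abs_sub _ _
    _ = _ := by rw [abs_neg, abs_mul]
  have h3 : |ρ^2+4*ρ| ≤ 1/2 := by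
    rw [abs_of_nonneg (by nlinarith)]; nlinarith
  have h4 : |sqc (gs ρ) 1| * |sqc (gs ρ) 1| ≤ (124/100)*(124/100) :=
    mul_le_mul h1 h1 (abs_nonneg _) (by norm_num)
  linarith

lemma hc_three_abs : |sqc (gs ρ) 3| ≤ 3/2 := by
  have h1 := hc_one_abs hρ1 hρ2
  have h2 := hc_two_abs hρ1 hρ2
  have e : sqc (gs ρ) 3 = (-ρ - (sqc (gs ρ) 1 * sqc (gs ρ) 2 + sqc (gs ρ) 2 * sqc (gs ρ) 1))/2 := by
    rw [sqc_succ, gs_coeff3]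
    norm_num [Finset.sum_range_succ, Finset.sum_range_one]
  rw [e, abs_div, abs_of_nonneg (by norm_num : (0:ℝ) ≤ (2:ℝ))]
  have h3 : |(-ρ - (sqc (gs ρ) 1 * sqc (gs ρ) 2 + sqc (gs ρ) 2 * sqc (gs ρ) 1))|
      ≤ |ρ| + (|sqc (gs ρ) 1| * |sqc (gs ρ) 2| + |sqc (gs ρ) 2| * |sqc (gs ρ) 1|) := by
    calc _ ≤ |-ρ| + |sqc (gs ρ) 1 * sqc (gs ρ) 2 + sqc (gs ρ) 2 * sqc (gs ρ) 1| := abs_sub _ _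
    _ ≤ _ := by
        rw [abs_neg]
        gcongr
        calc _ ≤ |sqc (gs ρ) 1 * sqc (gs ρ) 2| + |sqc (gs ρ) 2 * sqc (gs ρ) 1| := abs_add_le _ _
        _ = _ := by rw [abs_mul, abs_mul]
  have h5 : |ρ| ≤ 11/100 := by rw [abs_of_nonneg (by linarith)]; linarith
  have h6 : |sqc (gs ρ) 1| * |sqc (gs ρ) 2| ≤ (124/100)*(11/10) :=
    mul_le_mul h1 h2 (abs_nonneg _) (by norm_num)
  have h7 : |sqc (gs ρ) 2| * |sqc (gs ρ) 1| ≤ (11/10)*(124/100) :=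
    mul_le_mul h2 h1 (abs_nonneg _) (by norm_num)
  linarith

set_option maxHeartbeats 1000000 in
lemma hc_abs_le : ∀ n, |sqc (gs ρ) n| ≤ (27/10)^n := by
  intro n
  induction n using Nat.strong_induction_on with
  | _ n ih =>
    match n with
    | 0 => rw [sqc_zero]; norm_num
    | 1 => calc |sqc (gs ρ) 1| ≤ 124/100 := hc_one_abs hρ1 hρ2
           _ ≤ _ := by norm_num
    | 2 => calc |sqc (gs ρ) 2| ≤ 11/10 := hc_two_abs hρ1 hρ2
           _ ≤ _ := by norm_num
    | 3 => calc |sqc (gs ρ) 3| ≤ 3/2 := hc_three_abs hρ1 hρ2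
           _ ≤ _ := by norm_num
    | (m+4) =>
      have b3 := ih (m+3) (by omega)
      have b2 := ih (m+2) (by omega)
      have b1 := ih (m+1) (by omega)
      have e := hc_rec ρ m
      set x : ℝ := (m:ℝ) with hx
      have hx0 : 0 ≤ x := Nat.cast_nonneg m
      set K : ℝ := (27/10)^(m+1) with hK
      have hK0 : 0 < K := by positivity
      have eb3 : |sqc (gs ρ) (m+3)| ≤ K*(27/10)^2 := by
        rw [hK, ← pow_add]; exact_mod_cast b3
      have eb2 : |sqc (gs ρ) (m+2)| ≤ K*(27/10) := by
        rw [hK, ← pow_succ]; exact_mod_cast b2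
      have goal_eq : ((27:ℝ)/10)^(m+4) = K*(27/10)^3 := by rw [hK, ← pow_add]
      rw [goal_eq]
      have hq1 : (0:ℝ) ≤ ρ^3+4*ρ^2+22*ρ := by nlinarith
      have hq1' : ρ^3+4*ρ^2+22*ρ ≤ 247/100 := by nlinarith
      have hq2 : (0:ℝ) ≤ ρ^2+4*ρ := by nlinarith
      have hq2' : ρ^2+4*ρ ≤ 46/100 := by nlinarith
      have habs : |2*(x+4) * sqc (gs ρ) (m+4)|
          ≤ (ρ^3+4*ρ^2+22*ρ) * (2*x+5) * (K*(27/10)^2)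
            + (ρ^2+4*ρ) * (2*x+2) * (K*(27/10))
            + ρ * (2*x+1) * K := by
        rw [e]
        calc |(ρ^3+4*ρ^2+22*ρ) * (2*x+5) * sqc (gs ρ) (m+3)
              + (ρ^2+4*ρ) * (2*x+2) * sqc (gs ρ) (m+2)
              + ρ * (2*x-1) * sqc (gs ρ) (m+1)|
            ≤ |(ρ^3+4*ρ^2+22*ρ) * (2*x+5) * sqc (gs ρ) (m+3)|
              + |(ρ^2+4*ρ) * (2*x+2) * sqc (gs ρ) (m+2)|
              + |ρ * (2*x-1) * sqc (gs ρ) (m+1)| := (abs_add_le _ _).trans (by gcongr; exact abs_add_le _ _)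
          _ ≤ _ := by
              gcongr ?_ + ?_ + ?_
              · rw [abs_mul, abs_mul]
                rw [abs_of_nonneg hq1, abs_of_nonneg (by linarith : (0:ℝ) ≤ 2*x+5)]
                exact mul_le_mul_of_nonneg_left eb3 (by positivity)
              · rw [abs_mul, abs_mul]
                rw [abs_of_nonneg hq2, abs_of_nonneg (by linarith : (0:ℝ) ≤ 2*x+2)]
                exact mul_le_mul_of_nonneg_left eb2 (by positivity)
              · rw [abs_mul, abs_mul]
                have : |ρ| * |2*x-1| ≤ ρ * (2*x+1) := by
                  rw [abs_of_nonneg (by linarith : (0:ℝ) ≤ ρ)]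
                  apply mul_le_mul_of_nonneg_left _ (by linarith : (0:ℝ) ≤ ρ)
                  rw [abs_le]; constructor <;> linarith
                calc |ρ| * |2*x-1| * |sqc (gs ρ) (m+1)| ≤ ρ*(2*x+1) * |sqc (gs ρ) (m+1)| :=
                      mul_le_mul_of_nonneg_right this (abs_nonneg _)
                  _ ≤ ρ*(2*x+1)*K := by
                      apply mul_le_mul_of_nonneg_left _ (by nlinarith)
                      exact_mod_cast b1
      have h2x : |2*(x+4) * sqc (gs ρ) (m+4)| = 2*(x+4) * |sqc (gs ρ) (m+4)| := by
        rw [abs_mul, abs_of_nonneg (by linarith : (0:ℝ) ≤ 2*(x+4))]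
      rw [h2x] at habs
      have hρ0 : (0:ℝ) < ρ := by linarith
      have hstep : (ρ^3+4*ρ^2+22*ρ)*(2*x+5)*((27/10:ℝ)^2) + (ρ^2+4*ρ)*(2*x+2)*(27/10:ℝ)
          + ρ*(2*x+1) ≤ 2*(x+4)*(27/10:ℝ)^3 := by
        nlinarith [mul_nonneg (sub_nonneg.mpr hq1') (by linarith : (0:ℝ) ≤ 2*x+5),
          mul_nonneg (sub_nonneg.mpr hq2') (by linarith : (0:ℝ) ≤ 2*x+2),
          mul_nonneg (by linarith : (0:ℝ) ≤ 11/100 - ρ) (by linarith : (0:ℝ) ≤ 2*x+1)]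
      have hKstep := mul_le_mul_of_nonneg_left hstep hK0.le
      have hfin : 2*(x+4) * |sqc (gs ρ) (m+4)| ≤ 2*(x+4) * (K*(27/10)^3) := by
        linarith [habs, hKstep]
      exact le_of_mul_le_mul_left hfin (by linarith)
end bounds

lemma quartic_pos {x : ℝ} (h0 : 0 < x) (h1 : x ≤ 51/500) :
    0 < x^4+4*x^3+22*x^2-12*x+1 := by
  nlinarith [pow_pos h0 4, pow_pos h0 3,
    mul_nonneg (sub_nonneg.mpr h1) (by linarith : (0:ℝ) ≤ 3/11 - x)]

lemma exists_root_interval : ∃ x₀ : ℝ, 51/500 ≤ x₀ ∧ x₀ ≤ 11/100 ∧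
    x₀^4+4*x₀^3+22*x₀^2-12*x₀+1 = 0 := by
  set f : ℝ → ℝ := fun x => x^4+4*x^3+22*x^2-12*x+1 with hf
  have hcont : ContinuousOn f (Set.Icc (51/500) (11/100)) := by fun_prop
  have hab : (51/500 : ℝ) ≤ 11/100 := by norm_num
  have hmem : (0:ℝ) ∈ Set.Icc (f (11/100)) (f (51/500)) := by
    constructor <;> (simp only [hf]; norm_num)
  obtain ⟨x₀, hx₀, hfx₀⟩ := intermediate_value_Icc' hab hcont hmem
  exact ⟨x₀, hx₀.1, hx₀.2, hfx₀⟩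

lemma exists_rho : ∃ ρ : ℝ, (0 < ρ ∧ ρ ^ 4 + 4 * ρ ^ 3 + 22 * ρ ^ 2 - 12 * ρ + 1 = 0) ∧
    ∀ x : ℝ, 0 < x → x ^ 4 + 4 * x ^ 3 + 22 * x ^ 2 - 12 * x + 1 = 0 → ρ ≤ x := by
  obtain ⟨x₀, hx1, hx2, hx0⟩ := exists_root_interval
  set S : Set ℝ := {x : ℝ | 51/500 ≤ x ∧ x^4+4*x^3+22*x^2-12*x+1 = 0} with hS
  have hclosed : IsClosed S := by
    apply IsClosed.inter
    · exact isClosed_le continuous_const continuous_id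
    · exact isClosed_eq (by fun_prop) continuous_const
  have hne : S.Nonempty := ⟨x₀, hx1, hx0⟩
  have hbdd : BddBelow S := ⟨51/500, fun x hx => hx.1⟩
  have hmem := hclosed.csInf_mem hne hbdd
  refine ⟨sInf S, ⟨by linarith [hmem.1], hmem.2⟩, ?_⟩
  intro x hx hxr
  have : x ∈ S := by
    refine ⟨?_, hxr⟩
    by_contra hc
    push_neg at hc
    exact absurd hxr (ne_of_gt (quartic_pos hx hc.le))
  exact csInf_le hbdd this

lemma rho_bounds {ρ : ℝ}
    (h : (0 < ρ ∧ ρ ^ 4 + 4 * ρ ^ 3 + 22 * ρ ^ 2 - 12 * ρ + 1 = 0) ∧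
    ∀ x : ℝ, 0 < x → x ^ 4 + 4 * x ^ 3 + 22 * x ^ 2 - 12 * x + 1 = 0 → ρ ≤ x) :
    51/500 < ρ ∧ ρ ≤ 11/100 := by
  obtain ⟨x₀, hx1, hx2, hx0⟩ := exists_root_interval
  constructor
  · by_contra hc
    push_neg at hc
    exact absurd h.1.2 (ne_of_gt (quartic_pos h.1.1 hc))
  · exact (h.2 x₀ (by linarith) hx0).trans hx2

-- ### analysis part
lemma two_rpow_32_le : (2:ℝ)^((3:ℝ)/2) ≤ 3 := by
  have h1 : ((2:ℝ)^((3:ℝ)/2))^2 = 2^(3:ℕ) := by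
    rw [← Real.rpow_natCast ((2:ℝ)^((3:ℝ)/2)) 2, ← Real.rpow_mul (by norm_num),
      ← Real.rpow_natCast (2:ℝ) 3]
    norm_num
  nlinarith [Real.rpow_nonneg (by norm_num : (0:ℝ) ≤ 2) ((3:ℝ)/2)]

lemma rpow32_add_le (a b : ℝ) (ha : 0 ≤ a) (hb : 0 ≤ b) :
    (a+b)^((3:ℝ)/2) ≤ 2^((3:ℝ)/2) * (a^((3:ℝ)/2) + b^((3:ℝ)/2)) := by
  rcases le_total a b with h | h
  · calc (a+b)^((3:ℝ)/2) ≤ (2*b)^((3:ℝ)/2) :=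
          Real.rpow_le_rpow (by linarith) (by linarith) (by norm_num)
      _ = 2^((3:ℝ)/2) * b^((3:ℝ)/2) := Real.mul_rpow (by norm_num) hb
      _ ≤ _ := by
          have := Real.rpow_nonneg ha ((3:ℝ)/2)
          have h2 := Real.rpow_nonneg (by norm_num : (0:ℝ) ≤ 2) ((3:ℝ)/2)
          nlinarith
  · calc (a+b)^((3:ℝ)/2) ≤ (2*a)^((3:ℝ)/2) :=
          Real.rpow_le_rpow (by linarith) (by linarith) (by norm_num)
      _ = 2^((3:ℝ)/2) * a^((3:ℝ)/2) := Real.mul_rpow (by norm_num) ha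
      _ ≤ _ := by
          have := Real.rpow_nonneg hb ((3:ℝ)/2)
          have h2 := Real.rpow_nonneg (by norm_num : (0:ℝ) ≤ 2) ((3:ℝ)/2)
          nlinarith

lemma abs_w_rpow (j : ℕ) : |w j| * (j:ℝ)^((3:ℝ)/2) = aw j := by
  rcases Nat.eq_zero_or_pos j with h | h
  · subst h; simp [aw, Real.zero_rpow (by norm_num : ((3:ℝ)/2) ≠ 0)]
  · rw [aw, abs_of_neg (w_neg j h)]

lemma aw_le_half : ∀ j, aw j ≤ 1/2 := by
  intro j
  rcases Nat.eq_zero_or_pos j with h | h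
  · subst h; simp [aw]
  · induction j with
    | zero => omega
    | succ n ih =>
        rcases Nat.eq_zero_or_pos n with h2 | h2
        · subst h2; rw [aw_one]
        · exact (aw_anti n h2).trans (ih h2)

lemma rpow32_le_sq (k : ℕ) : ((k:ℝ))^((3:ℝ)/2) ≤ (k:ℝ)^2 + 1/2 := by
  rcases Nat.eq_zero_or_pos k with h | h
  · subst h; simp [Real.zero_rpow (by norm_num : ((3:ℝ)/2) ≠ 0)]
  · have h1 : (1:ℝ) ≤ (k:ℝ) := by exact_mod_cast h
    calc ((k:ℝ))^((3:ℝ)/2) ≤ ((k:ℝ))^((2:ℕ):ℝ) :=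
          Real.rpow_le_rpow_of_exponent_le h1 (by norm_num)
      _ = (k:ℝ)^2 := Real.rpow_natCast _ 2
      _ ≤ _ := by linarith

section analysis
variable {ρ : ℝ} (hρ1 : 51/500 < ρ) (hρ2 : ρ ≤ 11/100)

noncomputable def f2 (ρ : ℝ) (n k : ℕ) : ℝ :=
  if k ≤ n+1 then sqc (gs ρ) k * ρ^k * (w (n+1-k) * (n:ℝ)^((3:ℝ)/2)) else 0

include hρ1 hρ2

lemma hρ0 : (0:ℝ) < ρ := by linarith

lemma hterm_bound : ∀ k, |sqc (gs ρ) k * ρ^k| ≤ (297/1000)^k := by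
  intro k
  rw [abs_mul]
  calc |sqc (gs ρ) k| * |ρ^k| ≤ (27/10)^k * (11/100)^k := by
        apply mul_le_mul (hc_abs_le hρ1 hρ2 k) _ (abs_nonneg _) (by positivity)
        rw [abs_pow, abs_of_nonneg (by linarith : (0:ℝ) ≤ ρ)]
        exact pow_le_pow_left₀ (by linarith) hρ2 k
    _ = (297/1000)^k := by rw [← mul_pow]; norm_num

lemma f2_bound : ∀ n k, |f2 ρ n k| ≤ 3*(297/1000)^k*((k:ℝ)^2+1) := by
  intro n k
  rw [f2]
  split_ifs with hk
  · set j := n+1-k with hj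
    have hkj : (n:ℝ) ≤ (k:ℝ) + (j:ℝ) := by
      have : k + j = n+1 := by omega
      have := congrArg (Nat.cast (R := ℝ)) this
      push_cast at this
      linarith
    have hwn : |w j * (n:ℝ)^((3:ℝ)/2)| ≤ 3*((k:ℝ)^2+1) := by
      rw [abs_mul, abs_of_nonneg (Real.rpow_nonneg (Nat.cast_nonneg n) _)]
      calc |w j| * (n:ℝ)^((3:ℝ)/2)
          ≤ |w j| * ((k:ℝ)+(j:ℝ))^((3:ℝ)/2) := by
            apply mul_le_mul_of_nonneg_left _ (abs_nonneg _)
            exact Real.rpow_le_rpow (Nat.cast_nonneg n) hkj (by norm_num)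
        _ ≤ |w j| * (2^((3:ℝ)/2) * ((k:ℝ)^((3:ℝ)/2) + (j:ℝ)^((3:ℝ)/2))) := by
            apply mul_le_mul_of_nonneg_left _ (abs_nonneg _)
            exact rpow32_add_le _ _ (Nat.cast_nonneg k) (Nat.cast_nonneg j)
        _ = 2^((3:ℝ)/2) * (|w j| * (k:ℝ)^((3:ℝ)/2) + |w j| * (j:ℝ)^((3:ℝ)/2)) := by ring
        _ ≤ 3 * ((k:ℝ)^((3:ℝ)/2) + 1/2) := by
            have h1 : |w j| * (k:ℝ)^((3:ℝ)/2) ≤ (k:ℝ)^((3:ℝ)/2) := by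
              apply mul_le_of_le_one_left (Real.rpow_nonneg (Nat.cast_nonneg k) _) (w_abs_le j)
            have h2 : |w j| * (j:ℝ)^((3:ℝ)/2) ≤ 1/2 := by
              rw [abs_w_rpow]; exact aw_le_half j
            have h3 := two_rpow_32_le
            have h4 : (0:ℝ) ≤ 2^((3:ℝ)/2) := Real.rpow_nonneg (by norm_num) _
            have h5 : (0:ℝ) ≤ (k:ℝ)^((3:ℝ)/2) + 1/2 := by
              positivity
            nlinarith [abs_nonneg (w j), Real.rpow_nonneg (Nat.cast_nonneg k) ((3:ℝ)/2),
              Real.rpow_nonneg (Nat.cast_nonneg j) ((3:ℝ)/2)]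
        _ ≤ 3*((k:ℝ)^2+1) := by nlinarith [rpow32_le_sq k]
    calc |sqc (gs ρ) k * ρ^k * (w j * (n:ℝ)^((3:ℝ)/2))|
        = |sqc (gs ρ) k * ρ^k| * |w j * (n:ℝ)^((3:ℝ)/2)| := abs_mul _ _
      _ ≤ (297/1000)^k * (3*((k:ℝ)^2+1)) :=
          mul_le_mul (hterm_bound hρ1 hρ2 k) hwn (abs_nonneg _) (by positivity)
      _ = 3*(297/1000)^k*((k:ℝ)^2+1) := by ring
  · rw [abs_zero]; positivity

omit hρ1 hρ2 in
lemma bound_summable : Summable (fun k : ℕ => 3*(297/1000:ℝ)^k*((k:ℝ)^2+1)) := by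
  have s1 : Summable (fun k : ℕ => (k:ℝ)^2 * (297/1000:ℝ)^k) :=
    summable_pow_mul_geometric_of_norm_lt_one 2
      (by rw [Real.norm_eq_abs, abs_of_nonneg (by norm_num : (0:ℝ) ≤ 297/1000)]; norm_num)
  have s2 : Summable (fun k : ℕ => (297/1000:ℝ)^k) :=
    summable_geometric_of_lt_one (by norm_num) (by norm_num)
  apply Summable.congr (((s1.add s2).mul_left 3))
  intro k; ring

omit hρ1 hρ2 in
lemma ratio_tendsto (k : ℕ) :
    Tendsto (fun n : ℕ => (n:ℝ)/((n:ℝ)+(1-(k:ℝ)))) atTop (nhds 1) := by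
  have h1 : Tendsto (fun n : ℕ => (n:ℝ)+(1-(k:ℝ))) atTop atTop :=
    tendsto_atTop_add_const_right _ _ tendsto_natCast_atTop_atTop
  have h2 : Tendsto (fun n : ℕ => (1-(k:ℝ))/((n:ℝ)+(1-(k:ℝ)))) atTop (nhds 0) :=
    Tendsto.div_atTop tendsto_const_nhds h1
  have h3 : Tendsto (fun n : ℕ => 1 - (1-(k:ℝ))/((n:ℝ)+(1-(k:ℝ)))) atTop (nhds (1-0)) :=
    tendsto_const_nhds.sub h2
  rw [sub_zero] at h3
  apply h3.congr'
  filter_upwards [eventually_ge_atTop (k+1)] with n hn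
  have hnk : (0:ℝ) < (n:ℝ)+(1-(k:ℝ)) := by
    have : (k:ℝ) + 1 ≤ (n:ℝ) := by exact_mod_cast hn
    linarith
  field_simp
  ring

omit hρ1 hρ2 in
lemma w_shift_tendsto {c₀ : ℝ} (hc₀ : Tendsto aw atTop (nhds c₀)) (k : ℕ) :
    Tendsto (fun n : ℕ => w (n+1-k) * (n:ℝ)^((3:ℝ)/2)) atTop (nhds (-c₀)) := by
  have hshift : Tendsto (fun n : ℕ => n+1-k) atTop atTop := by
    apply tendsto_atTop_atTop.mpr
    intro b
    exact ⟨b+k, fun a ha => by omega⟩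
  have h1 : Tendsto (fun n : ℕ => -aw (n+1-k)) atTop (nhds (-c₀)) :=
    (hc₀.comp hshift).neg
  have h2 : Tendsto (fun n : ℕ => ((n:ℝ)/((n:ℝ)+(1-(k:ℝ))))^((3:ℝ)/2)) atTop
      (nhds 1) := by
    have hcont : ContinuousAt (fun x : ℝ => x^((3:ℝ)/2)) 1 :=
      Real.continuousAt_rpow_const 1 _ (Or.inl one_ne_zero)
    have := hcont.tendsto.comp (ratio_tendsto k)
    rwa [Real.one_rpow] at this
  have h3 := h1.mul h2
  rw [mul_one] at h3
  apply h3.congr'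
  filter_upwards [eventually_ge_atTop (k+1)] with n hn
  have hj : 1 ≤ n+1-k := by omega
  have hcast : ((n+1-k:ℕ):ℝ) = (n:ℝ)+(1-(k:ℝ)) := by
    have : (k:ℕ) ≤ n+1 := by omega
    push_cast [Nat.cast_sub this]
    ring
  have hn1 : (1:ℝ) ≤ ((n+1-k:ℕ):ℝ) := by exact_mod_cast hj
  have hjpos : (0:ℝ) < ((n+1-k:ℕ):ℝ) := by linarith
  have hrpos : (0:ℝ) < ((n+1-k:ℕ):ℝ)^((3:ℝ)/2) := Real.rpow_pos_of_pos hjpos _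
  rw [← hcast]
  rw [Real.div_rpow (Nat.cast_nonneg n) (le_of_lt hjpos)]
  rw [aw]
  field_simp

omit hρ1 hρ2 in
lemma coeff_Ss (n : ℕ) : coeff n (Ss ρ)
    = ∑ k ∈ Finset.range (n+1), sqc (gs ρ) k * ((ρ⁻¹)^(n-k) * w (n-k)) := by
  rw [Ss, mul_comm, coeff_mul, Finset.Nat.sum_antidiagonal_eq_sum_range_succ_mk]
  refine Finset.sum_congr rfl fun k hk => ?_
  rw [Hs, sqrtS, coeff_mk, Bs, coeff_rescale, sqrtS, coeff_mk]
  rfl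

omit hρ2 in
lemma tsum_f2 (n : ℕ) :
    ∑' k, f2 ρ n k = coeff (n+1) (Ss ρ) * ρ^(n+1) * (n:ℝ)^((3:ℝ)/2) := by
  have hρne : ρ ≠ 0 := by intro h; rw [h] at hρ1; norm_num at hρ1
  rw [tsum_eq_sum (s := Finset.range (n+2))
    (by intro b hb; rw [f2, if_neg]; simp only [Finset.mem_range] at hb; omega)]
  rw [coeff_Ss, Finset.sum_mul, Finset.sum_mul]
  apply Finset.sum_congr rfl
  intro k hk
  have hk' : k ≤ n+1 := by simpa [Nat.lt_succ_iff] using Finset.mem_range.mp hk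
  rw [f2, if_pos hk']
  have hpow : (ρ⁻¹)^(n+1-k) * ρ^(n+1) = ρ^k := by
    rw [inv_pow, inv_mul_eq_div, div_eq_iff (pow_ne_zero _ hρne), ← pow_add]
    congr 1
    omega
  calc sqc (gs ρ) k * ρ^k * (w (n+1-k) * (n:ℝ)^((3:ℝ)/2))
      = sqc (gs ρ) k * w (n+1-k) * (n:ℝ)^((3:ℝ)/2) * ((ρ⁻¹)^(n+1-k) * ρ^(n+1)) := by
        rw [hpow]; ring
    _ = sqc (gs ρ) k * ((ρ⁻¹)^(n+1-k) * w (n+1-k)) * ρ^(n+1) * (n:ℝ)^((3:ℝ)/2) := by ring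

noncomputable def Hρ (ρ : ℝ) : ℝ := ∑' k, sqc (gs ρ) k * ρ^k

omit hρ1 hρ2 in
lemma geo_summable : Summable (fun k : ℕ => (297/1000:ℝ)^k) :=
  summable_geometric_of_lt_one (by norm_num) (by norm_num)

lemma Hsummable : Summable (fun k => sqc (gs ρ) k * ρ^k) := by
  apply Summable.of_norm_bounded geo_summable
  intro k
  rw [Real.norm_eq_abs]
  exact hterm_bound hρ1 hρ2 k

lemma Hρ_pos : 0 < Hρ ρ := by
  have hsum := Hsummable hρ1 hρ2
  have h0 := Summable.tsum_eq_zero_add hsum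
  have hT : |∑' k : ℕ, sqc (gs ρ) (k+1) * ρ^(k+1)| ≤ 297/703 := by
    have hb : ∀ k : ℕ, ‖sqc (gs ρ) (k+1) * ρ^(k+1)‖ ≤ (297/1000:ℝ)^(k+1) := by
      intro k; rw [Real.norm_eq_abs]; exact hterm_bound hρ1 hρ2 (k+1)
    have hTs : Summable (fun k : ℕ => (297/1000:ℝ)^(k+1)) := by
      apply Summable.congr (geo_summable.mul_left (297/1000))
      intro k; ring
    have hnorm : Summable (fun k : ℕ => ‖sqc (gs ρ) (k+1) * ρ^(k+1)‖) :=
      Summable.of_nonneg_of_le (fun k => norm_nonneg _) hb hTs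
    calc |∑' k : ℕ, sqc (gs ρ) (k+1) * ρ^(k+1)|
        ≤ ∑' k : ℕ, ‖sqc (gs ρ) (k+1) * ρ^(k+1)‖ := by
          rw [← Real.norm_eq_abs]
          exact norm_tsum_le_tsum_norm hnorm
      _ ≤ ∑' k : ℕ, (297/1000:ℝ)^(k+1) := Summable.tsum_le_tsum hb hnorm hTs
      _ = (297/1000) * ∑' k : ℕ, (297/1000:ℝ)^k := by
          rw [← tsum_mul_left]
          apply tsum_congr; intro k; ring
      _ = (297/1000) * (1 - 297/1000)⁻¹ := by rw [tsum_geometric_of_lt_one (by norm_num) (by norm_num)]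
      _ = 297/703 := by norm_num
  have he : Hρ ρ = 1 + ∑' k : ℕ, sqc (gs ρ) (k+1) * ρ^(k+1) := by
    rw [Hρ, h0, sqc_zero, pow_zero, mul_one]
  rw [he]
  have := abs_le.mp hT
  linarith [this.1]

lemma Ss_tendsto {c₀ : ℝ} (hc₀l : Tendsto aw atTop (nhds c₀)) :
    Tendsto (fun n : ℕ => coeff (n+1) (Ss ρ) * ρ^(n+1) * (n:ℝ)^((3:ℝ)/2))
      atTop (nhds (Hρ ρ * (-c₀))) := by
  have hdc := tendsto_tsum_of_dominated_convergence
    (f := f2 ρ) (g := fun k => sqc (gs ρ) k * ρ^k * (-c₀))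
    (bound := fun k => 3*(297/1000:ℝ)^k*((k:ℝ)^2+1))
    bound_summable
    (fun k => by
      have h1 := (w_shift_tendsto hc₀l k).const_mul (sqc (gs ρ) k * ρ^k)
      apply h1.congr'
      filter_upwards [eventually_ge_atTop k] with n hn
      rw [f2, if_pos (by omega)])
    (Eventually.of_forall (fun n k => by
      rw [Real.norm_eq_abs]
      exact f2_bound hρ1 hρ2 n k))
  have hg : ∑' k, sqc (gs ρ) k * ρ^k * (-c₀) = Hρ ρ * (-c₀) := by
    rw [Hρ, tsum_mul_right]
  rw [hg] at hdc
  apply hdc.congr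
  intro n
  exact tsum_f2 hρ1 n

lemma coeff_Ls_tail (n : ℕ) (hn : 2 ≤ n) :
    coeff n (Ls ρ) = -(coeff (n+1) (Ss ρ))/4 := by
  rw [Ls, coeff_mk, map_sub]
  have h1 : coeff (n+1) (((1:PowerSeries ℝ)-X)^2) = 0 := by
    have e : ((1:PowerSeries ℝ)-X)^2 = 1 - 2*X + X^2 := by ring
    rw [e, map_add, map_sub, coeff_two_mul]
    rw [coeff_one, coeff_X, coeff_X_pow, if_neg (by omega), if_neg (by omega), if_neg (by omega)]
    ring
  rw [h1]
  ring

lemma Ls_asymp : ∃ c : ℝ, 0 < c ∧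
    Tendsto (fun n : ℕ => coeff n (Ls ρ) * ρ^n * (n:ℝ)^((3:ℝ)/2))
      atTop (nhds c) := by
  obtain ⟨c₀, hc₀q, hc₀l⟩ := exists_c0
  have hρpos : (0:ℝ) < ρ := by linarith
  have hHpos := Hρ_pos hρ1 hρ2
  refine ⟨c₀ * Hρ ρ / (4*ρ), by positivity, ?_⟩
  have hS := (Ss_tendsto hρ1 hρ2 hc₀l).const_mul (-(1/(4*ρ)))
  have hlim : -(1/(4*ρ)) * (Hρ ρ * (-c₀)) = c₀ * Hρ ρ / (4*ρ) := by
    field_simp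
  rw [hlim] at hS
  apply hS.congr'
  filter_upwards [eventually_ge_atTop 2] with n hn
  rw [coeff_Ls_tail hρ1 hρ2 n hn]
  have : ρ^(n+1) = ρ^n * ρ := pow_succ ρ n
  rw [this]
  field_simp

end analysis


/-- Instance `k = 1` of Proposition 3.4 of the paper: the generating function
`L` of the subset `𝓛⁽¹⁾` of planar Eulerian orientations is the unique power
series satisfying `2t L² − (1−t)² L + (1 − 2t − t²) = 0`; letting `ρ` be the
smallest positive real root of `X⁴ + 4X³ + 22X² − 12X + 1` (which exists),
the coefficients `ℓ_n` of `L` satisfy `ℓ_n ∼ c (1/ρ)ⁿ n^{−3/2}` for some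
constant `c > 0`, i.e. `ℓ_n ρⁿ n^{3/2} → c`. -/
theorem L1_unique_and_asymptotics :
    (∃! L : PowerSeries ℝ,
      2 * X * L ^ 2 - (1 - X) ^ 2 * L + (1 - 2 * X - X ^ 2) = 0) ∧
    (∃ ρ : ℝ, (0 < ρ ∧ ρ ^ 4 + 4 * ρ ^ 3 + 22 * ρ ^ 2 - 12 * ρ + 1 = 0) ∧
      ∀ x : ℝ, 0 < x → x ^ 4 + 4 * x ^ 3 + 22 * x ^ 2 - 12 * x + 1 = 0 → ρ ≤ x) ∧
    (∀ L : PowerSeries ℝ,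
      2 * X * L ^ 2 - (1 - X) ^ 2 * L + (1 - 2 * X - X ^ 2) = 0 →
      ∀ ρ : ℝ, ((0 < ρ ∧ ρ ^ 4 + 4 * ρ ^ 3 + 22 * ρ ^ 2 - 12 * ρ + 1 = 0) ∧
          ∀ x : ℝ, 0 < x → x ^ 4 + 4 * x ^ 3 + 22 * x ^ 2 - 12 * x + 1 = 0 → ρ ≤ x) →
        ∃ c : ℝ, 0 < c ∧
          Tendsto (fun n : ℕ =>
              (PowerSeries.coeff n L) * ρ ^ n * (n : ℝ) ^ (3 / 2 : ℝ))
            atTop (nhds c)) := by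
  obtain ⟨ρ₀, hρ₀⟩ := exists_rho
  refine ⟨⟨Ls ρ₀, Ls_spec ρ₀ hρ₀.1.1.ne' hρ₀.1.2,
      fun M hM => Ls_unique ρ₀ hρ₀.1.1.ne' hρ₀.1.2 M hM⟩, ⟨ρ₀, hρ₀⟩, ?_⟩
  intro L hL ρ hρ
  have hb := rho_bounds hρ
  have hLeq : L = Ls ρ := Ls_unique ρ hρ.1.1.ne' hρ.1.2 L hL
  rw [hLeq]
  exact Ls_asymp hb.1 hb.2
end
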